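/- arXiv:1312.7800 — 13 statements merged into one kernel-verified Lean document; each statement's English description precedes it below -/
import Mathlib

section
/- If (A, ⋆) is a finite-dimensional division algebra over a field K (i.e. ⋆ : A × A → A is bilinear and x ⋆ y ≠ 0 whenever x ≠ 0 and y ≠ 0) and • : A × A → A is a bilinear map such that for all nonzero x, y the vector x • y is nonzero and x ⋆ (x • y) is a scalar multiple of y, then there exists a unique quadratic form q on A such that x ⋆ (x • y) = q(x) · y for all x, y in A. -/
lemma aux_scalar {K A : Type*} [Field K] [AddCommGroup A] [Module K A] [Nontrivial A]
    (T : A →ₗ[K] A) (h : ∀ y : A, y ≠ 0 → ∃ c : K, T y = c • y) :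
    ∃ c : K, ∀ y : A, T y = c • y := by
  obtain ⟨y₀, hy₀⟩ := exists_ne (0 : A)
  obtain ⟨c, hc⟩ := h y₀ hy₀
  refine ⟨c, fun y => ?_⟩
  rcases eq_or_ne y 0 with rfl | hy
  · simp
  obtain ⟨d, hd⟩ := h y hy
  suffices hdc : d = c by rw [hd, hdc]
  by_cases hli : LinearIndependent K ![y₀, y]
  · have hsum : y₀ + y ≠ 0 := by
      intro h0
      have := (hli.eq_zero_of_pair (s := 1) (t := 1) (by simpa using h0)).1
      exact one_ne_zero this
    obtain ⟨e, he⟩ := h (y₀ + y) hsum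
    have h1 : (e - c) • y₀ + (e - d) • y = 0 := by
      have : T (y₀ + y) = c • y₀ + d • y := by rw [map_add, hc, hd]
      rw [he, smul_add] at this
      rw [sub_smul, sub_smul]
      rw [show e • y₀ = c • y₀ + d • y - e • y from by
        rw [← this]; abel] 
      abel
    have h2 := hli.eq_zero_of_pair h1
    have := h2.1; have := h2.2
    linear_combination h2.1 - h2.2
  · rw [LinearIndependent.pair_iff] at hli
    push_neg at hli
    obtain ⟨s, t, hst, hne⟩ := hli
    have ht : t ≠ 0 := by
      rintro rfl
      simp only [zero_smul, add_zero, smul_eq_zero] at hst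
      rcases hst with h | h
      · exact hne h rfl
      · exact hy₀ h
    have hty : t • y = (-s) • y₀ := by
      rw [neg_smul, eq_neg_iff_add_eq_zero, add_comm]; exact hst
    have hyv : y = (-s / t) • y₀ := by
      rw [div_eq_inv_mul, ← smul_smul, ← hty, smul_smul, inv_mul_cancel₀ ht, one_smul]
    have hTy : T y = (-s/t) • T y₀ := by rw [hyv, map_smul]
    rw [hd, hc, hyv, smul_smul, smul_smul] at hTy
    have hy0 : (-s/t) ≠ 0 := by
      intro h0
      rw [hyv, h0, zero_smul] at hy
      exact hy rfl
    have heq : d * (-s/t) = -s/t * c := smul_left_injective K hy₀ hTy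
    rw [mul_comm d] at heq
    exact mul_left_cancel₀ hy0 heq

theorem stmt_0 (K A : Type*) [Field K] [AddCommGroup A] [Module K A]
    [FiniteDimensional K A] [Nontrivial A]
    (star bull : A →ₗ[K] A →ₗ[K] A)
    (hstar : ∀ x y : A, x ≠ 0 → y ≠ 0 → star x y ≠ 0)
    (hbull : ∀ x y : A, x ≠ 0 → y ≠ 0 →
      bull x y ≠ 0 ∧ ∃ c : K, star x (bull x y) = c • y) :
    ∃! q : QuadraticForm K A, ∀ x y : A, star x (bull x y) = q x • y := by
  obtain ⟨y₀, hy₀⟩ := exists_ne (0 : A)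
  obtain ⟨φ, hφ⟩ : ∃ φ : Module.Dual K A, φ y₀ ≠ 0 := by
    by_contra h
    push_neg at h
    exact hy₀ ((Module.forall_dual_apply_eq_zero_iff K y₀).mp h)
  set f : Module.Dual K A := (φ y₀)⁻¹ • φ with hf_def
  have hf : f y₀ = 1 := by simp [hf_def, inv_mul_cancel₀ hφ]
  set qf : A → K := fun x => f (star x (bull x y₀)) with hqf_def
  have key : ∀ x : A, ∀ y : A, star x (bull x y) = qf x • y := by
    intro x
    have : ∃ c : K, ∀ y, star x (bull x y) = c • y := by
      rcases eq_or_ne x 0 with rfl | hx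
      · exact ⟨0, fun y => by simp⟩
      · exact aux_scalar ((star x).comp (bull x)) (fun y hy => (hbull x y hx hy).2)
    obtain ⟨c, hc⟩ := this
    have hqc : qf x = c := by
      rw [hqf_def]
      simp only [hc y₀, map_smul, smul_eq_mul, hf, mul_one]
    intro y; rw [hqc, hc]
  refine ⟨{ toFun := qf
            toFun_smul := ?_
            exists_companion' := ?_ }, fun x y => (key x y), ?_⟩
  · intro a x
    simp only [hqf_def, map_smul, LinearMap.smul_apply, smul_smul, smul_eq_mul]
  · refine ⟨LinearMap.mk₂ K (fun x z => f (star x (bull z y₀)) + f (star z (bull x y₀)))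
      (fun x x' z => by simp only [map_add, LinearMap.add_apply]; ring)
      (fun a x z => by simp only [map_smul, LinearMap.smul_apply, smul_eq_mul]; ring)
      (fun x z z' => by simp only [map_add, LinearMap.add_apply]; ring)
      (fun a x z => by simp only [map_smul, LinearMap.smul_apply, smul_eq_mul]; ring),
      fun x z => ?_⟩
    simp only [hqf_def, map_add, LinearMap.add_apply, LinearMap.mk₂_apply]
    ring
  · intro q' hq'
    ext x
    have h1 := hq' x y₀
    have h2 := key x y₀
    have : q' x • y₀ = qf x • y₀ := by rw [← h1, h2]
    exact smul_left_injective K hy₀ this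
end

section
/- Let (A, ⋆) be a finite-dimensional division algebra over K. If •₁ and •₂ are two bilinear quasi-left-inversions of ⋆ (that is, bilinear maps for which x ⋆ (x •ᵢ y) is always a nonzero scalar multiple of y for nonzero x, y), then there exists a nonzero scalar λ ∈ K with •₂ = λ •₁. -/
/-- If `g y` is always a scalar multiple of `f y` (for `y ≠ 0`) and `f` kills only `0`,
then `g` is a fixed scalar multiple of `f`. -/
lemma aux_prop {K A B : Type*} [Field K] [AddCommGroup A] [Module K A]
    [AddCommGroup B] [Module K B]
    (f g : A →ₗ[K] B) (hf : ∀ y : A, y ≠ 0 → f y ≠ 0)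
    (h : ∀ y : A, y ≠ 0 → ∃ c : K, g y = c • f y)
    (y₀ : A) (hy₀ : y₀ ≠ 0) :
    ∃ c : K, ∀ y, g y = c • f y := by
  have hinj : ∀ z : A, f z = 0 → z = 0 := by
    intro z hz
    by_contra hne
    exact hf z hne hz
  obtain ⟨c, hc⟩ := h y₀ hy₀
  refine ⟨c, fun y => ?_⟩
  by_cases hy : y = 0
  · simp [hy]
  by_cases hdep : ∃ a : K, y = a • y₀
  · obtain ⟨a, rfl⟩ := hdep
    rw [map_smul, map_smul, hc, smul_comm]
  · push_neg at hdep
    have hsum : y + y₀ ≠ 0 := by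
      intro hs
      apply hdep (-1)
      rw [neg_one_smul]
      exact add_eq_zero_iff_eq_neg.mp hs
    obtain ⟨c', hc'⟩ := h y hy
    obtain ⟨c'', hc''⟩ := h (y + y₀) hsum
    have e : c' • f y + c • f y₀ = c'' • f y + c'' • f y₀ := by
      have := hc''
      rw [map_add, map_add, hc, hc', smul_add] at this
      exact this
    have h0 : f ((c' - c'') • y + (c - c'') • y₀) = 0 := by
      rw [map_add, map_smul, map_smul, sub_smul, sub_smul]
      rw [← sub_eq_zero] at e
      calc (c' • f y - c'' • f y) + (c • f y₀ - c'' • f y₀)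
          = c' • f y + c • f y₀ - (c'' • f y + c'' • f y₀) := by abel
        _ = 0 := e
    have hz : (c' - c'') • y + (c - c'') • y₀ = 0 := hinj _ h0
    by_cases hne : c' = c''
    · subst hne
      rw [sub_self, zero_smul, zero_add] at hz
      rcases smul_eq_zero.mp hz with h1 | h1
      · have : c = c' := sub_eq_zero.mp h1
        rw [hc', this]
      · exact absurd h1 hy₀
    · exfalso
      apply hdep (-((c - c'') / (c' - c'')))
      have hd : c' - c'' ≠ 0 := sub_ne_zero.mpr hne
      have : (c' - c'') • y = -((c - c'') • y₀) := by
        rw [eq_neg_iff_add_eq_zero]; exact hz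
      calc y = ((c' - c'')⁻¹ * (c' - c'')) • y := by
              rw [inv_mul_cancel₀ hd, one_smul]
        _ = (c' - c'')⁻¹ • ((c' - c'') • y) := by rw [mul_smul]
        _ = (c' - c'')⁻¹ • (-((c - c'') • y₀)) := by rw [this]
        _ = (-((c - c'') / (c' - c''))) • y₀ := by
              rw [smul_neg, ← mul_smul, ← neg_smul]
              ring_nf
  
theorem stmt_2 (K A : Type*) [Field K] [AddCommGroup A] [Module K A]
    [FiniteDimensional K A] [Nontrivial A]
    (star bull₁ bull₂ : A →ₗ[K] A →ₗ[K] A)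
    (hstar : ∀ x y : A, x ≠ 0 → y ≠ 0 → star x y ≠ 0)
    (hbull₁ : ∀ x y : A, x ≠ 0 → y ≠ 0 →
      bull₁ x y ≠ 0 ∧ ∃ c : K, star x (bull₁ x y) = c • y)
    (hbull₂ : ∀ x y : A, x ≠ 0 → y ≠ 0 →
      bull₂ x y ≠ 0 ∧ ∃ c : K, star x (bull₂ x y) = c • y) :
    ∃ l : K, l ≠ 0 ∧ ∀ x y : A, bull₂ x y = l • bull₁ x y := by
  -- Step 1: pointwise proportionality
  have step1 : ∀ x y : A, x ≠ 0 → y ≠ 0 → ∃ c : K, bull₂ x y = c • bull₁ x y := by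
    intro x y hx hy
    obtain ⟨h1ne, c₁, hc₁⟩ := hbull₁ x y hx hy
    obtain ⟨h2ne, c₂, hc₂⟩ := hbull₂ x y hx hy
    have hc₁0 : c₁ ≠ 0 := by
      intro h
      rw [h, zero_smul] at hc₁
      exact hstar x _ hx h1ne hc₁
    refine ⟨c₂ / c₁, ?_⟩
    have hz0 : star x (bull₂ x y - (c₂ / c₁) • bull₁ x y) = 0 := by
      rw [map_sub, map_smul, hc₁, hc₂, smul_smul, div_mul_cancel₀ _ hc₁0, sub_self]
    have hz : bull₂ x y - (c₂ / c₁) • bull₁ x y = 0 := by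
      by_contra hne
      exact hstar x _ hx hne hz0
    exact sub_eq_zero.mp hz
  obtain ⟨y₀, hy₀⟩ := exists_ne (0 : A)
  -- Step 2: proportionality in the first variable, at y₀
  have hF : ∀ x : A, x ≠ 0 → bull₁.flip y₀ x ≠ 0 := by
    intro x hx
    exact (hbull₁ x y₀ hx hy₀).1
  have hG : ∀ x : A, x ≠ 0 → ∃ c : K, bull₂.flip y₀ x = c • bull₁.flip y₀ x := by
    intro x hx
    exact step1 x y₀ hx hy₀
  obtain ⟨l, hl⟩ := aux_prop (bull₁.flip y₀) (bull₂.flip y₀) hF hG y₀ hy₀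
  have hl' : ∀ x : A, bull₂ x y₀ = l • bull₁ x y₀ := hl
  have hl0 : l ≠ 0 := by
    intro h
    have h2 := (hbull₂ y₀ y₀ hy₀ hy₀).1
    rw [hl' y₀, h, zero_smul] at h2
    exact h2 rfl
  refine ⟨l, hl0, fun x y => ?_⟩
  by_cases hx : x = 0
  · simp [hx]
  by_cases hy : y = 0
  · simp [hy]
  obtain ⟨c, hc⟩ := aux_prop (bull₁ x) (bull₂ x)
    (fun y hy => (hbull₁ x y hx hy).1) (fun y hy => step1 x y hx hy) y₀ hy₀
  have hcl : c = l := by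
    have h1 : c • bull₁ x y₀ = l • bull₁ x y₀ := (hc y₀).symm.trans (hl' x)
    have hne := (hbull₁ x y₀ hx hy₀).1
    by_contra hccl
    apply hne
    have : (c - l) • bull₁ x y₀ = 0 := by
      rw [sub_smul, h1, sub_self]
    rcases smul_eq_zero.mp this with h | h
    · exact absurd (sub_eq_zero.mp h) hccl
    · exact h
  rw [hc y, hcl]
end

section
/- Let (A, ⋆, •) be an LDB division algebra with attached quadratic form q. Then for all x, y in A one has x • (x ⋆ y) = q(x) · y. -/
theorem stmt_4 (K A : Type*) [Field K] [AddCommGroup A] [Module K A]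
    [FiniteDimensional K A] [Nontrivial A]
    (star bull : A →ₗ[K] A →ₗ[K] A)
    (hstar : ∀ x y : A, x ≠ 0 → y ≠ 0 → star x y ≠ 0)
    (hbull : ∀ x y : A, x ≠ 0 → y ≠ 0 → bull x y ≠ 0)
    (q : QuadraticForm K A)
    (hq : ∀ x y : A, star x (bull x y) = q x • y) :
    ∀ x y : A, bull x (star x y) = q x • y := by
  intro x y
  by_cases hx : x = 0
  · subst hx
    simp [QuadraticMap.map_zero]
  · -- star x is injective
    have hinj : ∀ z z' : A, star x z = star x z' → z = z' := by
      intro z z' h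
      by_contra hne
      have : star x (z - z') ≠ 0 := hstar x _ hx (sub_ne_zero.mpr hne)
      apply this
      rw [map_sub, h, sub_self]
    apply hinj
    calc star x (bull x (star x y)) = q x • star x y := hq x _
      _ = star x (q x • y) := by rw [map_smul]
end

section
/- Let (A, ⋆, •) be an LDB division algebra with attached quadratic form q, and suppose it is e-standard for some e ∈ A, i.e. e ⋆ − is the identity of A and x • y = (−x + b_q(x,e)e) ⋆ y for all x, y, where b_q is the polar form of q. Then for every x ∈ A the endomorphism L_x := (x ⋆ −) satisfies b_q(x,e)·L_x − L_x² = q(x)·id_A. In particular, if x is q-orthogonal to e then L_x² = −q(x)·id_A. -/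
theorem stmt_5 (K A : Type*) [Field K] [AddCommGroup A] [Module K A]
    [FiniteDimensional K A] [Nontrivial A]
    (star bull : A →ₗ[K] A →ₗ[K] A)
    (hstar : ∀ x y : A, x ≠ 0 → y ≠ 0 → star x y ≠ 0)
    (hbull : ∀ x y : A, x ≠ 0 → y ≠ 0 → bull x y ≠ 0)
    (q : QuadraticForm K A)
    (hq : ∀ x y : A, star x (bull x y) = q x • y)
    (e : A)
    (he1 : ∀ y : A, star e y = y)
    (he2 : ∀ x y : A, bull x y = star (-x + QuadraticMap.polar ⇑q x e • e) y) :
    ∀ x : A,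
      (QuadraticMap.polar ⇑q x e • (star x : Module.End K A)
        - (star x : Module.End K A) * (star x : Module.End K A)
        = q x • (1 : Module.End K A)) ∧
      (QuadraticMap.polar ⇑q x e = 0 →
        (star x : Module.End K A) * (star x : Module.End K A)
          = (-(q x)) • (1 : Module.End K A)) := by
  intro x
  have key : QuadraticMap.polar ⇑q x e • (star x : Module.End K A)
      - (star x : Module.End K A) * (star x : Module.End K A)
      = q x • (1 : Module.End K A) := by
    ext y
    have h := hq x y
    rw [he2] at h
    simp only [map_add, map_neg, map_smul, LinearMap.add_apply, LinearMap.neg_apply,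
      LinearMap.smul_apply, he1] at h
    simp only [LinearMap.sub_apply, LinearMap.smul_apply, Module.End.mul_apply, Module.End.one_apply]
    linear_combination (norm := abel) h
  refine ⟨key, fun h0 => ?_⟩
  have := key
  rw [h0, zero_smul, zero_sub] at this
  rw [← neg_eq_iff_eq_neg.mpr this.symm] at *
  simp [neg_smul]
end

section
/- Let (A, ⋆) be a finite-dimensional division algebra over K and let u be a K-linear endomorphism of A that commutes with the left multiplication operator x ⋆ − for every x ∈ A. Then the minimal polynomial of u is irreducible over K. -/
theorem stmt_6 (K A : Type*) [Field K] [AddCommGroup A] [Module K A]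
    [FiniteDimensional K A] [Nontrivial A]
    (star : A →ₗ[K] A →ₗ[K] A)
    (hstar : ∀ x y : A, x ≠ 0 → y ≠ 0 → star x y ≠ 0)
    (u : Module.End K A)
    (hu : ∀ x y : A, u (star x y) = star x (u y)) :
    Irreducible (minpoly K u) := by
  have hint : IsIntegral K u := Algebra.IsIntegral.isIntegral u
  -- every polynomial in u commutes with left multiplications
  have hcomm : ∀ p : Polynomial K, ∀ x y : A,
      (Polynomial.aeval u p) (star x y) = star x ((Polynomial.aeval u p) y) := by
    intro p
    induction p using Polynomial.induction_on with
    | C a => intro x y; simp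
    | add p q hp hq => intro x y; simp [hp, hq]
    | monomial n a hn =>
      intro x y
      simp only [map_mul, Polynomial.aeval_C, Polynomial.aeval_X, pow_succ,
        Polynomial.aeval_X_pow] at *
      rw [← mul_assoc]
      simp only [Module.End.mul_apply] at hn ⊢
      rw [hu]
      exact hn x (u y)
  -- a nonzero commuting endomorphism is injective
  have hinj : ∀ v : Module.End K A,
      (∀ x y : A, v (star x y) = star x (v y)) → v ≠ 0 → Function.Injective v := by
    intro v hv hvne
    have key : ∀ y : A, v y = 0 → y = 0 := by
      intro y hy
      by_contra hy0
      have hinj' : Function.Injective (star.flip y) := by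
        intro a b hab
        by_contra hne
        apply hstar _ _ (sub_ne_zero.mpr hne) hy0
        simp only [LinearMap.flip_apply] at hab
        simp [map_sub, hab]
      have hsurj : Function.Surjective (star.flip y) :=
        (LinearMap.injective_iff_surjective).mp hinj'
      apply hvne
      ext z
      obtain ⟨x, hx⟩ := hsurj z
      simp only [LinearMap.flip_apply] at hx
      simp only [LinearMap.zero_apply, ← hx, hv x y, hy, map_zero]
    intro a b hab
    have h0 : v (a - b) = 0 := by rw [map_sub, hab, sub_self]
    exact sub_eq_zero.mp (key _ h0)
  have hne : minpoly K u ≠ 0 := minpoly.ne_zero hint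
  constructor
  · exact minpoly.not_isUnit K u
  · intro a b hab
    by_contra hcon
    push_neg at hcon
    obtain ⟨ha, hb⟩ := hcon
    by_cases ha0 : Polynomial.aeval u a = 0
    · have hdvd : minpoly K u ∣ a := minpoly.dvd K u ha0
      obtain ⟨c, hc⟩ := hdvd
      have heq : minpoly K u * 1 = minpoly K u * (c * b) :=
        calc minpoly K u * 1 = a * b := by rw [mul_one, hab]
        _ = minpoly K u * c * b := by rw [hc]
        _ = minpoly K u * (c * b) := by ring
      have h1 : (1 : Polynomial K) = c * b := mul_left_cancel₀ hne heq
      exact hb (IsUnit.of_mul_eq_one (a := b) c (by rw [mul_comm]; exact h1.symm))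
    · by_cases hb0 : Polynomial.aeval u b = 0
      · have hdvd : minpoly K u ∣ b := minpoly.dvd K u hb0
        obtain ⟨c, hc⟩ := hdvd
        have heq : minpoly K u * 1 = minpoly K u * (c * a) :=
          calc minpoly K u * 1 = a * b := by rw [mul_one, hab]
          _ = a * (minpoly K u * c) := by rw [hc]
          _ = minpoly K u * (c * a) := by ring
        have h1 : (1 : Polynomial K) = c * a := mul_left_cancel₀ hne heq
        exact ha (IsUnit.of_mul_eq_one (a := a) c (by rw [mul_comm]; exact h1.symm))
      · have hia := hinj _ (hcomm a) ha0
        have hib := hinj _ (hcomm b) hb0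
        have haeval : Polynomial.aeval u a * Polynomial.aeval u b = 0 := by
          rw [← map_mul, ← hab, minpoly.aeval]
        have hinjab : Function.Injective (Polynomial.aeval u a * Polynomial.aeval u b) := by
          intro x y hxy
          exact hib (hia hxy)
        rw [haeval] at hinjab
        obtain ⟨z, hz⟩ := exists_ne (0 : A)
        exact hz (hinjab (by simp))
end

section
/- Every LDB division algebra over a field K of dimension n > 1 has even dimension n. -/
open Polynomial

theorem stmt_7 (K A : Type*) [Field K] [AddCommGroup A] [Module K A]
    [FiniteDimensional K A] [Nontrivial A]
    (star bull : A →ₗ[K] A →ₗ[K] A)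
    (hstar : ∀ x y : A, x ≠ 0 → y ≠ 0 → star x y ≠ 0)
    (hbull : ∀ x y : A, x ≠ 0 → y ≠ 0 → bull x y ≠ 0)
    (q : QuadraticForm K A)
    (hq : ∀ x y : A, star x (bull x y) = q x • y)
    (hdim : 1 < Module.finrank K A) :
    Even (Module.finrank K A) := by
  classical
  set n := Module.finrank K A with hn
  -- anisotropy
  obtain ⟨y0, hy0⟩ := exists_ne (0 : A)
  have haniso : ∀ x : A, x ≠ 0 → q x ≠ 0 := by
    intro x hx hqx
    have h := hq x y0
    rw [hqx, zero_smul] at h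
    exact hstar x _ hx (hbull x y0 hx hy0) h
  -- composition identities
  have hcomp : ∀ x : A, (star x) ∘ₗ (bull x) = q x • LinearMap.id := by
    intro x; ext y; simp [hq]
  have hpolar : ∀ x z : A, (star x) ∘ₗ (bull z) + (star z) ∘ₗ (bull x)
      = QuadraticMap.polar q x z • LinearMap.id := by
    intro x z; ext y
    have h1 := hq (x + z) y
    rw [map_add star x z] at h1
    rw [map_add bull x z] at h1
    simp only [LinearMap.add_apply, map_add] at h1
    rw [hq x y, hq z y] at h1
    simp only [LinearMap.comp_apply, LinearMap.add_apply, LinearMap.smul_apply,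
      LinearMap.id_apply, QuadraticMap.polar, sub_smul]
    have : star x (bull z y) + star z (bull x y)
        = q (x + z) • y - q x • y - q z • y := by
      rw [← h1]; abel
    rw [this]
    simp [LinearMap.sub_apply, LinearMap.smul_apply, LinearMap.id_apply]
  -- basis and two independent vectors
  let b : Module.Basis (Fin n) K A := Module.finBasis K A
  have h2 : 2 ≤ n := hdim
  let i0 : Fin n := ⟨0, by omega⟩
  let i1 : Fin n := ⟨1, by omega⟩
  have hi01 : i0 ≠ i1 := by simp [i0, i1, Fin.ext_iff]
  set u : A := b i0 with hu
  set v : A := b i1 with hv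
  have hsv : ∀ s : K, s • u + v ≠ 0 := by
    intro s h
    have := congrArg (fun w => b.repr w i1) h
    simp [hu, hv, Module.Basis.repr_self, Finsupp.single_apply, hi01] at this
  have huz : u ≠ 0 := b.ne_zero i0
  -- matrices
  have hsmulid : ∀ c : K, LinearMap.toMatrix b b (c • LinearMap.id) = c • (1 : Matrix (Fin n) (Fin n) K) := by
    intro c
    simp only [map_smul, LinearMap.toMatrix_id]
  have e1 : LinearMap.toMatrix b b (star u) * LinearMap.toMatrix b b (bull u) = q u • 1 := by
    rw [show LinearMap.toMatrix b b (star u) * LinearMap.toMatrix b b (bull u) = LinearMap.toMatrix b b ((star u) ∘ₗ (bull u)) from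
      (LinearMap.toMatrix_comp b b b _ _).symm, hcomp, hsmulid]
  have e3 : LinearMap.toMatrix b b (star v) * LinearMap.toMatrix b b (bull v) = q v • 1 := by
    rw [show LinearMap.toMatrix b b (star v) * LinearMap.toMatrix b b (bull v) = LinearMap.toMatrix b b ((star v) ∘ₗ (bull v)) from
      (LinearMap.toMatrix_comp b b b _ _).symm, hcomp, hsmulid]
  have e2 : LinearMap.toMatrix b b (star u) * LinearMap.toMatrix b b (bull v) + LinearMap.toMatrix b b (star v) * LinearMap.toMatrix b b (bull u)
      = QuadraticMap.polar q u v • 1 := by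
    rw [show LinearMap.toMatrix b b (star u) * LinearMap.toMatrix b b (bull v) = LinearMap.toMatrix b b ((star u) ∘ₗ (bull v)) from
      (LinearMap.toMatrix_comp b b b _ _).symm,
      show LinearMap.toMatrix b b (star v) * LinearMap.toMatrix b b (bull u) = LinearMap.toMatrix b b ((star v) ∘ₗ (bull u)) from
      (LinearMap.toMatrix_comp b b b _ _).symm,
      ← map_add, hpolar, hsmulid]
  -- base change helper
  have hms : ∀ c : K, ((c • (1 : Matrix (Fin n) (Fin n) K)).map (C : K →+* K[X]))
      = C c • (1 : Matrix (Fin n) (Fin n) K[X]) := by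
    intro c; ext i j
    simp [Matrix.map_apply, Matrix.one_apply, apply_ite (C : K → K[X]), mul_ite]
  -- generic matrices over K[X]
  set P1 : Matrix (Fin n) (Fin n) K[X] := (LinearMap.toMatrix b b (star u)).map C with hP1
  set P0 : Matrix (Fin n) (Fin n) K[X] := (LinearMap.toMatrix b b (star v)).map C with hP0
  set Q1 : Matrix (Fin n) (Fin n) K[X] := (LinearMap.toMatrix b b (bull u)).map C with hQ1
  set Q0 : Matrix (Fin n) (Fin n) K[X] := (LinearMap.toMatrix b b (bull v)).map C with hQ0
  set Dm : Matrix (Fin n) (Fin n) K[X] := (X : K[X]) • P1 + P0 with hDm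
  set Em : Matrix (Fin n) (Fin n) K[X] := (X : K[X]) • Q1 + Q0 with hEm
  set r : K[X] := C (q u) * X ^ 2 + C (QuadraticMap.polar q u v) * X + C (q v) with hr
  have key : Dm * Em = r • (1 : Matrix (Fin n) (Fin n) K[X]) := by
    have c1 : P1 * Q1 = C (q u) • 1 := by
      rw [hP1, hQ1, ← Matrix.map_mul, e1, hms]
    have c3 : P0 * Q0 = C (q v) • 1 := by
      rw [hP0, hQ0, ← Matrix.map_mul, e3, hms]
    have c2 : P1 * Q0 + P0 * Q1 = C (QuadraticMap.polar q u v) • 1 := by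
      rw [hP1, hQ0, hP0, hQ1, ← Matrix.map_mul, ← Matrix.map_mul, ← Matrix.map_add (C : K → K[X]) (fun a b => map_add C a b), e2, hms]
    rw [hDm, hEm, add_mul, mul_add, mul_add, smul_mul_assoc, smul_mul_assoc,
      mul_smul_comm, mul_smul_comm, c1, c3]
    have : (X : K[X]) • (P1 * Q0) + (X : K[X]) • (P0 * Q1) = (X : K[X]) • (C (QuadraticMap.polar q u v) • 1) := by
      rw [← smul_add, c2]
    rw [show (X : K[X]) • ((X : K[X]) • (C (q u) • (1 : Matrix (Fin n) (Fin n) K[X]))) + (X : K[X]) • (P1 * Q0) +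
        ((X : K[X]) • (P0 * Q1) + C (q v) • 1)
        = (X : K[X]) • ((X : K[X]) • (C (q u) • (1 : Matrix (Fin n) (Fin n) K[X])))
          + ((X : K[X]) • (P1 * Q0) + (X : K[X]) • (P0 * Q1)) + C (q v) • 1 by abel, this,
      smul_smul, smul_smul, smul_smul, ← add_smul, ← add_smul, hr]
    congr 1
    ring
  -- determinants
  have hdet : Dm.det * Em.det = r ^ n := by
    rw [← Matrix.det_mul, key, Matrix.det_smul, Matrix.det_one, mul_one, Fintype.card_fin]
  -- r facts
  have hqu : q u ≠ 0 := haniso u huz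
  have hr2 : r.natDegree = 2 := Polynomial.natDegree_quadratic hqu
  have hrne : r ≠ 0 := fun h => by simp [h] at hr2
  have heval : ∀ s : K, r.eval s = q (s • u + v) := by
    intro s
    have h : q (s • u + v) = q (s • u) + q v + QuadraticMap.polar q (s • u) v := by
      rw [QuadraticMap.polar]; ring
    rw [h, QuadraticMap.map_smul, QuadraticMap.polar_smul_left]
    simp [hr, smul_eq_mul]
    ring
  have hirr : Irreducible r := by
    rw [Polynomial.irreducible_iff_roots_eq_zero_of_degree_le_three (by omega) (by omega)]
    rw [Multiset.eq_zero_iff_forall_notMem]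
    intro s hs
    rw [Polynomial.mem_roots hrne] at hs
    exact haniso _ (hsv s) (by rw [← heval s]; exact hs)
  -- degree bounds
  have hentryD : ∀ i j, (Dm i j).natDegree ≤ 1 := by
    intro i j
    have : Dm i j = X * P1 i j + P0 i j := by
      simp [hDm, Matrix.add_apply, Matrix.smul_apply, smul_eq_mul]
    rw [this]
    refine (Polynomial.natDegree_add_le _ _).trans ?_
    simp [hP1, hP0, Matrix.map_apply, Polynomial.natDegree_C]
    exact (Polynomial.natDegree_mul_le).trans (by simp)
  have hentryE : ∀ i j, (Em i j).natDegree ≤ 1 := by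
    intro i j
    have : Em i j = X * Q1 i j + Q0 i j := by
      simp [hEm, Matrix.add_apply, Matrix.smul_apply, smul_eq_mul]
    rw [this]
    refine (Polynomial.natDegree_add_le _ _).trans ?_
    simp [hQ1, hQ0, Matrix.map_apply, Polynomial.natDegree_C]
    exact (Polynomial.natDegree_mul_le).trans (by simp)
  have hdegbound : ∀ (M : Matrix (Fin n) (Fin n) K[X]),
      (∀ i j, (M i j).natDegree ≤ 1) → M.det.natDegree ≤ n := by
    intro M hM
    rw [Matrix.det_apply']
    refine Polynomial.natDegree_sum_le_of_forall_le _ _ ?_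
    intro σ _
    refine (Polynomial.natDegree_mul_le).trans ?_
    have h1 : ((Equiv.Perm.sign σ : ℤ) : K[X]).natDegree = 0 := Polynomial.natDegree_intCast _
    rw [h1, zero_add]
    refine (Polynomial.natDegree_prod_le _ _).trans ?_
    calc ∑ i, (M (σ i) i).natDegree ≤ ∑ _i : Fin n, 1 :=
          Finset.sum_le_sum (fun i _ => hM (σ i) i)
      _ = n := by simp
  have hdegD : Dm.det.natDegree ≤ n := hdegbound Dm hentryD
  have hdegE : Em.det.natDegree ≤ n := hdegbound Em hentryE
  have hrn : r ^ n ≠ 0 := pow_ne_zero _ hrne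
  have hDne : Dm.det ≠ 0 := fun h => hrn (by rw [← hdet, h, zero_mul])
  have hEne : Em.det ≠ 0 := fun h => hrn (by rw [← hdet, h, mul_zero])
  have hsum : Dm.det.natDegree + Em.det.natDegree = 2 * n := by
    rw [← Polynomial.natDegree_mul hDne hEne, hdet, Polynomial.natDegree_pow, hr2]
    ring
  have hDdeg : Dm.det.natDegree = n := by omega
  -- prime factorization
  have hprime : Prime r := hirr.prime
  obtain ⟨i, hi, hassoc⟩ := (dvd_prime_pow hprime n).mp ⟨Em.det, hdet.symm⟩
  obtain ⟨uu, huu⟩ := hassoc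
  have hideg : n = 2 * i := by
    have h1 : (Dm.det * (uu : K[X])).natDegree = (r ^ i).natDegree := by rw [huu]
    rw [Polynomial.natDegree_mul hDne (Units.ne_zero uu),
      Polynomial.natDegree_eq_zero_of_isUnit uu.isUnit, Polynomial.natDegree_pow, hr2, hDdeg]
        at h1
    omega
  exact ⟨i, by omega⟩
end

section
/- If the field K has characteristic not 2, then every LDB division algebra over K has dimension 1, 2, 4, or 8. -/
open Module TensorProduct

universe uV in
theorem anticomm_dvd' (F : Type*) [Field F] (htwo : (2 : F) ≠ 0) (μ : F) (hμ : μ * μ = -1) :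
    ∀ (m : ℕ) (V : Type uV) [AddCommGroup V] [Module F V] [FiniteDimensional F V]
      (G : Fin m → Module.End F V),
      (∀ k, G k * G k = -1) →
      (∀ k l, k ≠ l → G k * G l = -(G l * G k)) →
      2 ^ (m / 2) ∣ finrank F V := by
  intro m
  induction m using Nat.strong_induction_on with
  | _ m ih =>
  intro V _ _ _ G hsq hanti
  rcases Nat.lt_or_ge m 2 with hm | hm
  · interval_cases m <;> simp
  have h0 : (0 : ℕ) < m := by omega
  have h1 : (1 : ℕ) < m := hm
  set i0 : Fin m := ⟨0, h0⟩
  set i1 : Fin m := ⟨1, h1⟩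
  have h01 : i0 ≠ i1 := by simp [i0, i1, Fin.ext_iff]
  set H : Module.End F V := G i0 * G i1 with hH
  have hHsq : H * H = -1 := by
    have h := hanti _ _ h01.symm
    calc H * H = G i0 * (G i1 * G i0) * G i1 := by rw [hH]; noncomm_ring
    _ = G i0 * (-(G i0 * G i1)) * G i1 := by rw [h]
    _ = -((G i0 * G i0) * (G i1 * G i1)) := by noncomm_ring
    _ = -1 := by rw [hsq, hsq]; noncomm_ring
  set Wp : Submodule F V := LinearMap.ker (H - μ • (1 : Module.End F V)) with hWp
  set Wm : Submodule F V := LinearMap.ker (H + μ • (1 : Module.End F V)) with hWm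
  have memp : ∀ x : V, x ∈ Wp ↔ H x = μ • x := by
    intro x
    simp [hWp, LinearMap.mem_ker, sub_eq_zero, LinearMap.sub_apply]
  have memm : ∀ x : V, x ∈ Wm ↔ H x = -(μ • x) := by
    intro x
    simp [hWm, LinearMap.mem_ker, LinearMap.add_apply, add_eq_zero_iff_eq_neg]
  have hμ0 : μ ≠ 0 := by
    intro h
    rw [h, mul_zero] at hμ
    exact (by norm_num : (0:F) ≠ -1) hμ
  have hHH : ∀ x : V, H (H x) = -x := by
    intro x
    have := LinearMap.congr_fun hHsq x
    simpa using this
  have hsup : Wp ⊔ Wm = ⊤ := by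
    rw [eq_top_iff]
    intro x _
    have hxp : (2:F)⁻¹ • (x - μ • H x) ∈ Wp := by
      rw [memp, map_smul, map_sub, map_smul, hHH]
      match_scalars <;> field_simp <;> linear_combination hμ
    have hxm : (2:F)⁻¹ • (x + μ • H x) ∈ Wm := by
      rw [memm, map_smul, map_add, map_smul, hHH]
      match_scalars <;> field_simp <;> linear_combination hμ
    have hx : x = (2:F)⁻¹ • (x - μ • H x) + (2:F)⁻¹ • (x + μ • H x) := by
      match_scalars <;> field_simp <;> norm_num
    rw [hx]
    exact Submodule.add_mem_sup hxp hxm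
  have hinf : Wp ⊓ Wm = ⊥ := by
    rw [eq_bot_iff]
    intro x hx
    rw [Submodule.mem_inf] at hx
    obtain ⟨hp, hm'⟩ := hx
    rw [memp] at hp
    rw [memm] at hm'
    have h2 : (2:F) • (μ • x) = 0 := by
      rw [two_smul]
      nth_rewrite 1 [← hp]
      rw [hm']
      abel
    rcases smul_eq_zero.mp h2 with h | h
    · exact absurd h htwo
    rcases smul_eq_zero.mp h with h | h
    · exact absurd h hμ0
    · simpa using h
  -- G i0 anticommutes with H
  have hG0H : ∀ x : V, H (G i0 x) = -(G i0 (H x)) := by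
    intro x
    have hop : H * G i0 = -(G i0 * H) := by
      have h := hanti _ _ h01.symm
      calc H * G i0 = G i0 * (G i1 * G i0) := by rw [hH]; noncomm_ring
      _ = G i0 * (-(G i0 * G i1)) := by rw [h]
      _ = -(G i0 * H) := by rw [hH]; noncomm_ring
    have := LinearMap.congr_fun hop x
    simpa using this
  have hG0inj : Function.Injective (G i0) := by
    intro x y hxy
    have hx := LinearMap.congr_fun (hsq i0) x
    have hy := LinearMap.congr_fun (hsq i0) y
    simp only [Module.End.mul_apply, LinearMap.neg_apply, Module.End.one_apply] at hx hy
    rw [← neg_neg x, ← hx, hxy, hy, neg_neg]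
  have hpm : ∀ x ∈ Wp, G i0 x ∈ Wm := by
    intro x hx
    rw [memp] at hx
    rw [memm, hG0H, hx, map_smul]
  have hmp : ∀ x ∈ Wm, G i0 x ∈ Wp := by
    intro x hx
    rw [memm] at hx
    rw [memp, hG0H, hx]
    simp
  have heq : finrank F Wp = finrank F Wm := by
    have f1 : finrank F Wp ≤ finrank F Wm :=
      LinearMap.finrank_le_finrank_of_injective (f := (G i0).restrict hpm)
        (fun x y hxy => by
          have := congrArg (Subtype.val) hxy
          simp only [LinearMap.restrict_apply] at this
          exact Subtype.ext (hG0inj this))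
    have f2 : finrank F Wm ≤ finrank F Wp :=
      LinearMap.finrank_le_finrank_of_injective (f := (G i0).restrict hmp)
        (fun x y hxy => by
          have := congrArg (Subtype.val) hxy
          simp only [LinearMap.restrict_apply] at this
          exact Subtype.ext (hG0inj this))
    omega
  have hdim : finrank F V = 2 * finrank F Wp := by
    have := Submodule.finrank_sup_add_finrank_inf_eq Wp Wm
    rw [hsup, hinf] at this
    rw [finrank_top] at this
    simp only [finrank_bot] at this
    omega
  -- restrict the remaining operators to Wp
  set ι : Fin (m - 2) → Fin m := fun k => ⟨k.1 + 2, by omega⟩ with hι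
  have hιinj : Function.Injective ι := by
    intro k l hkl
    simp only [hι, Fin.mk.injEq] at hkl
    exact Fin.ext (by omega)
  have hι0 : ∀ k, ι k ≠ i0 := by intro k h; simpa [hι, i0, Fin.ext_iff] using h
  have hι1 : ∀ k, ι k ≠ i1 := by intro k h; simpa [hι, i1, Fin.ext_iff] using h
  have hcommH : ∀ k, H * G (ι k) = G (ι k) * H := by
    intro k
    have h0' := hanti _ _ (hι0 k).symm  -- G i0 * G (ι k) = -(G (ι k) * G i0)
    have h1' := hanti _ _ (hι1 k).symm
    calc H * G (ι k) = G i0 * (G i1 * G (ι k)) := by rw [hH]; noncomm_ring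
    _ = G i0 * (-(G (ι k) * G i1)) := by rw [h1']
    _ = -((G i0 * G (ι k)) * G i1) := by noncomm_ring
    _ = -((-(G (ι k) * G i0)) * G i1) := by rw [h0']
    _ = G (ι k) * H := by rw [hH]; noncomm_ring
  have hpres : ∀ k, ∀ x ∈ Wp, G (ι k) x ∈ Wp := by
    intro k x hx
    rw [memp] at hx ⊢
    have := LinearMap.congr_fun (hcommH k) x
    simp only [Module.End.mul_apply] at this
    rw [this, hx, map_smul]
  set G' : Fin (m - 2) → Module.End F Wp := fun k => (G (ι k)).restrict (hpres k) with hG'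
  have hsq' : ∀ k, G' k * G' k = -1 := by
    intro k
    ext x
    have h := LinearMap.congr_fun (hsq (ι k)) (x : V)
    simp only [Module.End.mul_apply, LinearMap.neg_apply, Module.End.one_apply] at h ⊢
    simp only [hG', LinearMap.restrict_coe_apply]
    simpa using h
  have hanti' : ∀ k l, k ≠ l → G' k * G' l = -(G' l * G' k) := by
    intro k l hkl
    ext x
    have h := LinearMap.congr_fun (hanti (ι k) (ι l) (fun h => hkl (hιinj h))) (x : V)
    simp only [Module.End.mul_apply, LinearMap.neg_apply] at h ⊢
    simp only [hG', LinearMap.restrict_coe_apply]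
    simpa using h
  have hm2 : m - 2 < m := by omega
  have hdvd := ih (m - 2) hm2 Wp G' hsq' hanti'
  have hpow : m / 2 = (m - 2) / 2 + 1 := by omega
  rw [hpow, pow_succ, hdim, mul_comm (2 ^ ((m-2)/2)) 2]
  exact Nat.mul_dvd_mul_left 2 hdvd


theorem pow_gt_aux : ∀ n : ℕ, 9 ≤ n → n < 2 ^ ((n - 1) / 2) := by
  intro n
  induction n using Nat.strong_induction_on with
  | _ n ih =>
  intro hn
  rcases Nat.lt_or_ge n 11 with h | h
  · interval_cases n <;> norm_num
  · have h2 := ih (n - 2) (by omega) (by omega)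
    have he : n - 2 - 1 = n - 3 := by omega
    rw [he] at h2
    have hp : (n - 1) / 2 = (n - 3) / 2 + 1 := by omega
    rw [hp, pow_succ]
    omega

theorem numeric_1248 (n : ℕ) (hn : 0 < n) (hd : 2 ^ ((n - 1) / 2) ∣ n) :
    n = 1 ∨ n = 2 ∨ n = 4 ∨ n = 8 := by
  rcases Nat.lt_or_ge n 9 with h | h
  · interval_cases n <;> revert hd <;> decide
  · exact absurd (Nat.le_of_dvd hn hd) (not_le.mpr (pow_gt_aux n h))

set_option maxHeartbeats 1000000 in
theorem stmt_9 (K A : Type*) [Field K] [AddCommGroup A] [Module K A]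
    [FiniteDimensional K A] [Nontrivial A]
    (hchar : (2 : K) ≠ 0)
    (star bull : A →ₗ[K] A →ₗ[K] A)
    (hstar : ∀ x y : A, x ≠ 0 → y ≠ 0 → star x y ≠ 0)
    (hbull : ∀ x y : A, x ≠ 0 → y ≠ 0 → bull x y ≠ 0)
    (q : QuadraticForm K A)
    (hq : ∀ x y : A, star x (bull x y) = q x • y) :
    Module.finrank K A = 1 ∨ Module.finrank K A = 2 ∨
    Module.finrank K A = 4 ∨ Module.finrank K A = 8 := by
  classical
  have hnpos : 0 < finrank K A := finrank_pos
  set n := finrank K A with hn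
  -- q is anisotropic
  have hq0 : ∀ x : A, x ≠ 0 → q x ≠ 0 := by
    intro x hx h0
    obtain ⟨y, hy⟩ := exists_ne (0 : A)
    have h := hq x y
    rw [h0, zero_smul] at h
    exact hstar x (bull x y) hx (hbull x y hx hy) h
  letI : Invertible (2 : K) := invertibleOfNonzero hchar
  have hBsymm : (QuadraticMap.polarBilin q).IsSymm := by
    rw [LinearMap.isSymm_def]
    intro x y
    simp only [QuadraticMap.polarBilin_apply_apply, RingHom.id_apply]
    exact QuadraticMap.polar_comm _ x y
  obtain ⟨v, hv⟩ := LinearMap.BilinForm.exists_orthogonal_basis hBsymm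
  -- polarization
  have hpol : ∀ x z y : A, star x (bull z y) + star z (bull x y)
      = (q (x + z) - q x - q z) • y := by
    intro x z y
    have h := hq (x + z) y
    rw [map_add, map_add, LinearMap.add_apply, LinearMap.add_apply, map_add, map_add,
      hq x y, hq z y] at h
    rw [sub_smul, sub_smul, ← h]
    abel
  -- orthogonality: polar vanishes on distinct basis vectors
  have horth : ∀ i j : Fin n, i ≠ j → q (v i + v j) - q (v i) - q (v j) = 0 := by
    intro i j hij
    have h : QuadraticMap.polarBilin q (v i) (v j) = 0 := hv hij
    simpa only [QuadraticMap.polarBilin_apply_apply, QuadraticMap.polar] using h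
  -- units
  have hSunit : ∀ i : Fin n, IsUnit (star (v i)) := by
    intro i
    rw [Module.End.isUnit_iff]
    have hinj : Function.Injective (star (v i)) := by
      intro a b hab
      by_contra hne
      have hsub : a - b ≠ 0 := sub_ne_zero.mpr hne
      have : star (v i) (a - b) = 0 := by rw [map_sub, hab, sub_self]
      exact hstar _ _ (v.ne_zero i) hsub this
    exact ⟨hinj, LinearMap.injective_iff_surjective.mp hinj⟩
  set u : Fin n → (Module.End K A)ˣ := fun i => (hSunit i).unit with hu
  have hucoe : ∀ i, (↑(u i) : Module.End K A) = star (v i) := fun i => rfl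
  set d : Fin n → K := fun i => q (v i) with hdd
  have hd : ∀ i, d i ≠ 0 := fun i => hq0 _ (v.ne_zero i)
  -- star (v i) * bull (v i) = d i • 1
  have hSC : ∀ i, (↑(u i) : Module.End K A) * bull (v i) = d i • 1 := by
    intro i
    ext y
    simp only [hucoe, Module.End.mul_apply, LinearMap.smul_apply, Module.End.one_apply]
    exact hq (v i) y
  have hC : ∀ i, bull (v i) = d i • (↑(u i)⁻¹ : Module.End K A) := by
    intro i
    have h := congrArg (fun f => (↑(u i)⁻¹ : Module.End K A) * f) (hSC i)
    simp only [← mul_assoc, Units.inv_mul, one_mul, mul_smul_comm, mul_one] at h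
    exact h
  -- mixed relation
  have hmix : ∀ i j : Fin n, i ≠ j →
      (↑(u i) : Module.End K A) * bull (v j) + (↑(u j) : Module.End K A) * bull (v i) = 0 := by
    intro i j hij
    ext y
    simp only [hucoe, LinearMap.add_apply, Module.End.mul_apply, LinearMap.zero_apply]
    rw [hpol, horth i j hij, zero_smul]
  -- R i j : u i * (u j)⁻¹ = (-(d i * (d j)⁻¹)) • (u j * (u i)⁻¹)
  have R : ∀ i j : Fin n, i ≠ j →
      (↑(u i) : Module.End K A) * ↑(u j)⁻¹
        = (-(d i * (d j)⁻¹)) • ((↑(u j) : Module.End K A) * ↑(u i)⁻¹) := by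
    intro i j hij
    have h := hmix i j hij
    rw [hC i, hC j] at h
    rw [mul_smul_comm, mul_smul_comm] at h
    -- h : d j • (u i * (u j)⁻¹) + d i • (u j * (u i)⁻¹) = 0
    have h2 : d j • ((↑(u i) : Module.End K A) * ↑(u j)⁻¹)
        = -(d i • ((↑(u j) : Module.End K A) * ↑(u i)⁻¹)) := by
      rw [← add_eq_zero_iff_eq_neg]; exact h
    calc (↑(u i) : Module.End K A) * ↑(u j)⁻¹
        = (d j)⁻¹ • (d j • ((↑(u i) : Module.End K A) * ↑(u j)⁻¹)) := by
          rw [smul_smul, inv_mul_cancel₀ (hd j), one_smul]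
    _ = (d j)⁻¹ • -(d i • ((↑(u j) : Module.End K A) * ↑(u i)⁻¹)) := by rw [h2]
    _ = (-(d i * (d j)⁻¹)) • ((↑(u j) : Module.End K A) * ↑(u i)⁻¹) := by
          rw [smul_neg, smul_smul, ← neg_smul, mul_comm]
  -- swap relation
  have hswap : ∀ i j : Fin n, i ≠ j →
      (↑(u i)⁻¹ : Module.End K A) * ↑(u j)
        = (-(d j * (d i)⁻¹)) • ((↑(u j)⁻¹ : Module.End K A) * ↑(u i)) := by
    intro i j hij
    have h := R j i hij.symm
    calc (↑(u i)⁻¹ : Module.End K A) * ↑(u j)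
        = ↑(u i)⁻¹ * (↑(u j) * ↑(u i)⁻¹) * ↑(u i) := by
          rw [mul_assoc, mul_assoc, Units.inv_mul, mul_one]
    _ = ↑(u i)⁻¹ * ((-(d j * (d i)⁻¹)) • (↑(u i) * ↑(u j)⁻¹)) * ↑(u i) := by rw [h]
    _ = (-(d j * (d i)⁻¹)) • (↑(u i)⁻¹ * (↑(u i) * ↑(u j)⁻¹) * ↑(u i)) := by
          rw [mul_smul_comm, smul_mul_assoc]
    _ = (-(d j * (d i)⁻¹)) • ((↑(u j)⁻¹ : Module.End K A) * ↑(u i)) := by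
          rw [← mul_assoc, Units.inv_mul, one_mul]
  -- the anticommuting family
  set L : Fin n := ⟨n - 1, by omega⟩ with hL
  set e : Fin (n - 1) → Fin n := fun k => ⟨k.1, by omega⟩ with he
  have heL : ∀ k, e k ≠ L := by
    intro k h
    rw [Fin.ext_iff] at h
    simp only [he, hL] at h
    omega
  have heinj : Function.Injective e := by
    intro k l hkl
    rw [Fin.ext_iff] at hkl ⊢
    exact hkl
  set c : Fin (n - 1) → K := fun k => -(d (e k) * (d L)⁻¹) with hc
  have hc0 : ∀ k, c k ≠ 0 := by
    intro k
    simp only [hc, neg_ne_zero]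
    exact mul_ne_zero (hd (e k)) (inv_ne_zero (hd L))
  set Fop : Fin (n - 1) → Module.End K A :=
    fun k => (↑(u L)⁻¹ : Module.End K A) * ↑(u (e k)) with hFop
  have hFsq : ∀ k, Fop k * Fop k = c k • 1 := by
    intro k
    calc Fop k * Fop k
        = ↑(u L)⁻¹ * ((↑(u (e k)) : Module.End K A) * ↑(u L)⁻¹) * ↑(u (e k)) := by
          simp only [hFop, mul_assoc]
    _ = ↑(u L)⁻¹ * (c k • ((↑(u L) : Module.End K A) * ↑(u (e k))⁻¹)) * ↑(u (e k)) := by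
          rw [R (e k) L (heL k)]
    _ = c k • ((↑(u L)⁻¹ : Module.End K A) * ↑(u L) * (↑(u (e k))⁻¹ * ↑(u (e k)))) := by
          rw [mul_smul_comm, smul_mul_assoc, mul_assoc, mul_assoc, mul_assoc]
    _ = c k • 1 := by rw [Units.inv_mul, Units.inv_mul, one_mul]
  have hFmul : ∀ k l : Fin (n - 1), k ≠ l →
      Fop k * Fop l = (d (e l) * (d L)⁻¹) • ((↑(u (e l))⁻¹ : Module.End K A) * ↑(u (e k))) := by
    intro k l hkl
    have hekl : e k ≠ e l := fun h => hkl (heinj h)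
    calc Fop k * Fop l
        = ↑(u L)⁻¹ * ((↑(u (e k)) : Module.End K A) * ↑(u L)⁻¹) * ↑(u (e l)) := by
          simp only [hFop, mul_assoc]
    _ = ↑(u L)⁻¹ * (c k • ((↑(u L) : Module.End K A) * ↑(u (e k))⁻¹)) * ↑(u (e l)) := by
          rw [R (e k) L (heL k)]
    _ = c k • ((↑(u L)⁻¹ : Module.End K A) * ↑(u L) * (↑(u (e k))⁻¹ * ↑(u (e l)))) := by
          rw [mul_smul_comm, smul_mul_assoc, mul_assoc, mul_assoc, mul_assoc]
    _ = c k • ((↑(u (e k))⁻¹ : Module.End K A) * ↑(u (e l))) := by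
          rw [Units.inv_mul, one_mul]
    _ = c k • ((-(d (e l) * (d (e k))⁻¹)) •
          ((↑(u (e l))⁻¹ : Module.End K A) * ↑(u (e k)))) := by
          rw [hswap (e k) (e l) hekl]
    _ = (d (e l) * (d L)⁻¹) • ((↑(u (e l))⁻¹ : Module.End K A) * ↑(u (e k))) := by
          rw [smul_smul]
          congr 1
          simp only [hc]
          have h1 := hd (e k)
          have h2 := hd L
          field_simp
  have hFanti : ∀ k l : Fin (n - 1), k ≠ l → Fop k * Fop l = -(Fop l * Fop k) := by
    intro k l hkl
    have hekl : e k ≠ e l := fun h => hkl (heinj h)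
    rw [hFmul k l hkl, hFmul l k hkl.symm, hswap (e k) (e l) hekl, smul_smul, ← neg_smul]
    congr 1
    have h1 := hd (e k)
    have h2 := hd L
    field_simp
  -- base change to the algebraic closure
  set Kb := AlgebraicClosure K with hKb
  have hinjKb : Function.Injective (algebraMap K Kb) := (algebraMap K Kb).injective
  have htwoKb : (2 : Kb) ≠ 0 := by
    intro h
    apply hchar
    apply hinjKb
    rw [map_ofNat, map_zero, h]
  obtain ⟨μ, hμ2⟩ := IsAlgClosed.exists_pow_nat_eq (-1 : Kb) (n := 2) (by norm_num)
  have hμ : μ * μ = -1 := by rw [← hμ2]; ring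
  set φ := Module.End.baseChangeHom K Kb A with hφ
  have hc0' : ∀ k, algebraMap K Kb (c k) ≠ 0 := by
    intro k h
    exact hc0 k (hinjKb (by rw [h, map_zero]))
  choose lam hlam using fun k : Fin (n - 1) =>
    IsAlgClosed.exists_pow_nat_eq (-(algebraMap K Kb (c k))⁻¹) (n := 2) (by norm_num)
  set G : Fin (n - 1) → Module.End Kb (Kb ⊗[K] A) := fun k => lam k • φ (Fop k) with hG
  have hφsmul : ∀ (a : K) (f : Module.End K A),
      φ (a • f) = algebraMap K Kb a • φ f := by
    intro a f
    rw [Algebra.smul_def, map_mul, AlgHom.commutes, ← Algebra.smul_def]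
    exact (algebraMap_smul Kb a (φ f)).symm
  have hGsq : ∀ k, G k * G k = -1 := by
    intro k
    have h1 : G k * G k = (lam k * lam k) • (φ (Fop k) * φ (Fop k)) := by
      rw [hG]
      simp only [smul_mul_assoc, mul_smul_comm, smul_smul]
    rw [h1, ← map_mul, hFsq k, hφsmul, map_one, smul_smul]
    have h2 : lam k * lam k * algebraMap K Kb (c k) = -1 := by
      have h3 : lam k * lam k = -(algebraMap K Kb (c k))⁻¹ := by rw [← hlam k]; ring
      rw [h3, neg_mul, inv_mul_cancel₀ (hc0' k)]
    rw [h2]; exact neg_one_smul Kb (1 : Module.End Kb (Kb ⊗[K] A))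
  have hGanti : ∀ k l, k ≠ l → G k * G l = -(G l * G k) := by
    intro k l hkl
    have h1 : G k * G l = (lam k * lam l) • (φ (Fop k) * φ (Fop l)) := by
      rw [hG]; simp only [smul_mul_assoc, mul_smul_comm, smul_smul]
      rw [mul_comm (lam l) (lam k)]
    have h2 : G l * G k = (lam l * lam k) • (φ (Fop l) * φ (Fop k)) := by
      rw [hG]; simp only [smul_mul_assoc, mul_smul_comm, smul_smul]
      rw [mul_comm (lam k) (lam l)]
    rw [h1, h2, ← map_mul, ← map_mul, hFanti k l hkl, map_neg, smul_neg,
      mul_comm (lam l) (lam k)]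
  have hdvd := anticomm_dvd' Kb htwoKb μ hμ (n - 1) (Kb ⊗[K] A) G hGsq hGanti
  rw [Module.finrank_baseChange] at hdvd
  exact numeric_1248 n hnpos hdvd
end

section
/- Let K be a field of characteristic 2 and L a finite-dimensional field extension of K that is hyper-radicial, i.e. x² ∈ K for all x ∈ L. Then, viewing multiplication of L as a bilinear map ⋆ over K, the triple (L, ⋆, ⋆) is an LDB division algebra over K whose attached quadratic form is q : x ↦ x², and this q is anisotropic with identically zero polar form. -/
theorem stmt_12 (K L : Type*) [Field K] [Field L] [Algebra K L]
    [CharP K 2] [FiniteDimensional K L]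
    (hrad : ∀ x : L, ∃ c : K, x ^ 2 = algebraMap K L c) :
    ∃ q : QuadraticForm K L,
      (∀ x y : L, x * (x * y) = q x • y) ∧
      (∀ x : L, x ≠ 0 → q x ≠ 0) ∧
      (∀ x y : L, QuadraticMap.polar ⇑q x y = 0) ∧
      (∀ x : L, algebraMap K L (q x) = x ^ 2) := by
  have inj : Function.Injective (algebraMap K L) := (algebraMap K L).injective
  haveI : CharP L 2 := charP_of_injective_algebraMap inj 2
  set f : L → K := fun x => Classical.choose (hrad x) with hfdef
  have hf : ∀ x : L, x ^ 2 = algebraMap K L (f x) := fun x => Classical.choose_spec (hrad x)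
  have hadd : ∀ x y : L, f (x + y) = f x + f y := by
    intro x y
    apply inj
    rw [map_add, ← hf, ← hf, ← hf, add_pow_char]
  have hsmul : ∀ (a : K) (x : L), f (a • x) = (a * a) • f x := by
    intro a x
    apply inj
    rw [smul_eq_mul, map_mul, map_mul, ← hf, ← hf, Algebra.smul_def, mul_pow]; ring
  refine ⟨⟨f, hsmul, ⟨0, fun x y => by simp [hadd]⟩⟩, ?_, ?_, ?_, ?_⟩
  · intro x y
    have : x * (x * y) = x ^ 2 * y := by ring
    rw [this, hf, Algebra.smul_def]; rfl
  · intro x hx h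
    apply hx
    have : x ^ 2 = 0 := by rw [hf]; simp [show f x = 0 from h]
    exact pow_eq_zero_iff two_ne_zero |>.mp this
  · intro x y
    show f (x + y) - f x - f y = 0
    rw [hadd]; ring
  · intro x
    exact (hf x).symm
end

section
/- Let (A, ⋆, •) be an LDB division algebra over a field K of characteristic 2 whose attached quadratic form q has degenerate polar form (i.e. the radical of b_q is nonzero), and suppose some e in the radical of b_q satisfies q(e) = 1 and the algebra is e-standard (e ⋆ − = id and x • y = x ⋆ y for x in the radical). If L denotes the K-subalgebra of End_K(A) generated by the operators x ⋆ − for x in the radical R of b_q, then L is a field and f² ∈ K·id_A for every f ∈ L. -/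
lemma char2_addself {K M : Type*} [Field K] [AddCommGroup M] [Module K M]
    (h2 : (2 : K) = 0) (a : M) : a + a = 0 := by
  rw [← two_smul K a, h2, zero_smul]

theorem stmt_14 (K A : Type*) [Field K] [AddCommGroup A] [Module K A]
    [FiniteDimensional K A] [Nontrivial A] [CharP K 2]
    (star bull : A →ₗ[K] A →ₗ[K] A)
    (hstar : ∀ x y : A, x ≠ 0 → y ≠ 0 → star x y ≠ 0)
    (hbull : ∀ x y : A, x ≠ 0 → y ≠ 0 → bull x y ≠ 0)
    (q : QuadraticForm K A)
    (hq : ∀ x y : A, star x (bull x y) = q x • y)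
    (R : Set A) (hR : R = {x : A | ∀ y : A, QuadraticMap.polar ⇑q x y = 0})
    (e : A) (he_rad : e ∈ R) (he_q : q e = 1)
    (he_std : ∀ y : A, star e y = y)
    (hstd : ∀ x ∈ R, ∀ y : A, bull x y = star x y) :
    IsField (Algebra.adjoin K ((fun x : A => (star x : Module.End K A)) '' R)) ∧
    (∀ f : Module.End K A,
      f ∈ Algebra.adjoin K ((fun x : A => (star x : Module.End K A)) '' R) →
      ∃ c : K, f * f = c • (1 : Module.End K A)) := by
  have h2 : (2 : K) = 0 := by
    have := CharP.cast_eq_zero K 2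
    exact_mod_cast this
  -- polarization identity (★)
  have hpolar : ∀ u v y : A, star u (bull v y) + star v (bull u y)
      = QuadraticMap.polar ⇑q u v • y := by
    intro u v y
    rw [QuadraticMap.polar, sub_smul, sub_smul, ← hq (u + v) y, ← hq u y, ← hq v y]
    simp only [map_add, LinearMap.add_apply]
    abel
  -- bull = star
  have hbs : ∀ v y : A, bull v y = star v y := by
    intro v y
    have h := hpolar e v y
    have hpe : QuadraticMap.polar ⇑q e v = 0 := by
      rw [hR] at he_rad; exact he_rad v
    rw [hpe, zero_smul, he_std, hstd e he_rad y, he_std y] at h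
    -- h : bull v y + star v y = 0
    have := char2_addself (M := A) h2 (star v y)
    calc bull v y = bull v y + (star v y + star v y) := by rw [this, add_zero]
      _ = (bull v y + star v y) + star v y := by abel
      _ = star v y := by rw [h, zero_add]
  -- squares
  have hsq : ∀ v y : A, star v (star v y) = q v • y := by
    intro v y; rw [← hbs v y]; exact hq v y
  -- elements of R commute (as operators) with everything
  have hswap : ∀ u ∈ R, ∀ v y : A, star u (star v y) = star v (star u y) := by
    intro u hu v y
    have h := hpolar u v y
    rw [hbs, hbs] at h
    have hp0 : QuadraticMap.polar ⇑q u v = 0 := by rw [hR] at hu; exact hu v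
    rw [hp0, zero_smul] at h
    have h2' := char2_addself (M := A) h2 (star v (star u y))
    calc star u (star v y)
        = star u (star v y) + (star v (star u y) + star v (star u y)) := by
          rw [h2', add_zero]
      _ = (star u (star v y) + star v (star u y)) + star v (star u y) := by abel
      _ = star v (star u y) := by rw [h, zero_add]
  set S : Set (Module.End K A) := (fun x : A => (star x : Module.End K A)) '' R with hS
  set L := Algebra.adjoin K S with hLdef
  -- every element of L commutes with every star v
  have hc : ∀ f : Module.End K A, f ∈ L → ∀ v : A, Commute f (star v : Module.End K A) := by
    intro f hf v
    induction hf using Algebra.adjoin_induction with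
    | mem g hg =>
        obtain ⟨x, hx, rfl⟩ := hg
        show _ = _
        apply LinearMap.ext
        intro a
        simp only [Module.End.mul_apply]
        exact hswap x hx v a
    | algebraMap r => exact Algebra.commutes r (star v : Module.End K A)
    | add g h _ _ ihg ihh => exact ihg.add_left ihh
    | mul g h _ _ ihg ihh => exact ihg.mul_left ihh
  -- L is commutative
  have hLcomm : ∀ f ∈ L, ∀ g ∈ L, Commute f g := by
    intro f hf g hg
    induction hg using Algebra.adjoin_induction with
    | mem g hg' =>
        obtain ⟨x, _, rfl⟩ := hg'
        exact hc f hf x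
    | algebraMap r => exact (Algebra.commutes r f).symm
    | add g h _ _ ihg ihh => exact ihg.add_right ihh
    | mul g h _ _ ihg ihh => exact ihg.mul_right ihh
  -- nonzero elements of L are injective (kernel trick)
  have hker : ∀ f : Module.End K A, f ∈ L → ∀ k : A, k ≠ 0 → f k = 0 → f = 0 := by
    intro f hf k hk hfk
    have hinj : Function.Injective (star.flip k) := by
      rw [injective_iff_map_eq_zero]
      intro v hv
      by_contra hv0
      exact hstar v k hv0 hk hv
    have hsurj : Function.Surjective (star.flip k) :=
      (LinearMap.injective_iff_surjective).mp hinj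
    apply LinearMap.ext
    intro a
    obtain ⟨v, hv⟩ := hsurj a
    have : f (star v k) = star v (f k) := by
      have := (hc f hf v).eq
      calc f (star v k) = (f * star v) k := rfl
        _ = (star v * f) k := by rw [this]
        _ = star v (f k) := rfl
    simp only [LinearMap.flip_apply] at hv
    rw [← hv, this, hfk, map_zero, LinearMap.zero_apply]
  -- the square of every element of L is a scalar
  have hsquare : ∀ f : Module.End K A, f ∈ L → ∃ c : K, f * f = c • (1 : Module.End K A) := by
    intro f hf
    induction hf using Algebra.adjoin_induction with
    | mem g hg =>
        obtain ⟨x, _, rfl⟩ := hg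
        refine ⟨q x, ?_⟩
        apply LinearMap.ext
        intro a
        simpa only [Module.End.mul_apply, LinearMap.smul_apply, Module.End.one_apply]
          using hsq x a
    | algebraMap r =>
        refine ⟨r * r, ?_⟩
        rw [Algebra.algebraMap_eq_smul_one, smul_mul_smul_comm, one_mul]
    | add g h hg hh ihg ihh =>
        obtain ⟨a, ha⟩ := ihg
        obtain ⟨b, hb⟩ := ihh
        refine ⟨a + b, ?_⟩
        have hcom : g * h = h * g := (hLcomm g hg h hh).eq
        have hz : h * g + h * g = 0 :=
          char2_addself (M := Module.End K A) h2 (h * g)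
        calc (g + h) * (g + h) = g * g + h * h + (h * g + h * g) := by
              rw [add_mul, mul_add, mul_add, hcom]; abel
          _ = g * g + h * h := by rw [hz, add_zero]
          _ = (a + b) • 1 := by rw [ha, hb, add_smul]
    | mul g h hg hh ihg ihh =>
        obtain ⟨a, ha⟩ := ihg
        obtain ⟨b, hb⟩ := ihh
        refine ⟨a * b, ?_⟩
        have hcom : h * g = g * h := (hLcomm g hg h hh).eq.symm
        calc (g * h) * (g * h) = g * (h * g * h) := by rw [mul_assoc, mul_assoc]
          _ = g * (g * h * h) := by rw [hcom]
          _ = g * g * (h * h) := by rw [mul_assoc g h h, ← mul_assoc]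
          _ = (a * b) • 1 := by rw [ha, hb, smul_mul_smul_comm, one_mul]
  have hnt : (1 : Module.End K A) ≠ 0 := by
    obtain ⟨a, ha⟩ := exists_ne (0 : A)
    intro h
    apply ha
    calc a = (1 : Module.End K A) a := rfl
      _ = (0 : Module.End K A) a := by rw [h]
      _ = 0 := rfl
  refine ⟨⟨⟨0, 1, ?_⟩, ?_, ?_⟩, fun f hf => hsquare f hf⟩
  · intro h
    exact hnt (congrArg Subtype.val h).symm
  · rintro ⟨f, hf⟩ ⟨g, hg⟩
    apply Subtype.ext
    exact (hLcomm f hf g hg).eq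
  · rintro ⟨f, hf⟩ ha
    have hf0 : f ≠ 0 := by
      intro h
      apply ha
      apply Subtype.ext
      exact h
    obtain ⟨c, hc'⟩ := hsquare f hf
    have hc0 : c ≠ 0 := by
      intro hc0
      rw [hc0, zero_smul] at hc'
      obtain ⟨a0, ha0⟩ := exists_ne (0 : A)
      by_cases hfa : f a0 = 0
      · exact hf0 (hker f hf a0 ha0 hfa)
      · apply hf0
        apply hker f hf (f a0) hfa
        calc f (f a0) = (f * f) a0 := rfl
          _ = (0 : Module.End K A) a0 := by rw [hc']
          _ = 0 := rfl
    refine ⟨⟨c⁻¹ • f, Subalgebra.smul_mem _ hf c⁻¹⟩, ?_⟩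
    apply Subtype.ext
    show f * (c⁻¹ • f) = 1
    rw [mul_smul_comm, hc', smul_smul, inv_mul_cancel₀ hc0, one_smul]
end

section
/- Over a field K of characteristic 2, the quadratic form attached to an LDB division algebra is either totally degenerate (zero polar form) or non-degenerate. -/
theorem stmt_15 (K A : Type*) [Field K] [AddCommGroup A] [Module K A]
    [FiniteDimensional K A] [Nontrivial A] [CharP K 2]
    (star bull : A →ₗ[K] A →ₗ[K] A)
    (hstar : ∀ x y : A, x ≠ 0 → y ≠ 0 → star x y ≠ 0)
    (hbull : ∀ x y : A, x ≠ 0 → y ≠ 0 → bull x y ≠ 0)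
    (q : QuadraticForm K A)
    (hq : ∀ x y : A, star x (bull x y) = q x • y) :
    (∀ x y : A, QuadraticMap.polar ⇑q x y = 0) ∨
    (∀ x : A, (∀ y : A, QuadraticMap.polar ⇑q x y = 0) → x = 0) := by
  by_contra hcon
  push_neg at hcon
  obtain ⟨⟨u, v, hβ⟩, a, ha_rad, ha0⟩ := hcon
  classical
  obtain ⟨y₀, hy₀⟩ := exists_ne (0 : A)
  -- characteristic two facts
  have h2K : (2 : K) = 0 := by exact_mod_cast CharP.cast_eq_zero K 2
  have addA : ∀ x : A, x + x = 0 := fun x => by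
    rw [← two_smul K x, h2K, zero_smul]
  have cancelA : ∀ x y : A, x + y = 0 → x = y := fun x y h => by
    have h1 : -y = x := neg_eq_of_add_eq_zero_left h
    rw [← h1, neg_eq_of_add_eq_zero_left (addA y)]
  have moveA : ∀ X Y Z : A, X = Y + Z → Y = X + Z := fun X Y Z h => by
    rw [h, add_assoc, addA, add_zero]
  -- anisotropy
  have aniso : ∀ z : A, z ≠ 0 → q z ≠ 0 := by
    intro z hz hqz
    exact hstar z _ hz (hbull z y₀ hz hy₀) (by rw [hq, hqz, zero_smul])
  set c := q a with hc_def
  have hc : c ≠ 0 := aniso a ha0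
  -- the polarization identity
  have cross : ∀ x z y : A, star x (bull z y) + star z (bull x y)
      = QuadraticMap.polar ⇑q x z • y := by
    intro x z y
    have h := hq (x + z) y
    simp only [map_add, LinearMap.add_apply] at h
    calc star x (bull z y) + star z (bull x y)
        = (star x (bull x y) + star z (bull x y)
            + (star x (bull z y) + star z (bull z y)))
            - star x (bull x y) - star z (bull z y) := by abel
      _ = q (x + z) • y - q x • y - q z • y := by
          rw [h, hq, hq]
      _ = QuadraticMap.polar ⇑q x z • y := by
          rw [QuadraticMap.polar, sub_smul, sub_smul]
  -- a in the radical
  have I3 : ∀ z x : A, star a (bull z x) = star z (bull a x) := by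
    intro z x
    have h := cross a z x
    rw [ha_rad z, zero_smul] at h
    exact cancelA _ _ h
  have Linj : ∀ w : A, star a w = 0 → w = 0 := by
    intro w hw
    by_contra h
    exact hstar a w ha0 h hw
  have SL : ∀ x : A, bull a (star a x) = c • x := by
    intro x
    have h : star a (bull a (star a x) - c • x) = 0 := by
      rw [map_sub, hq a (star a x), map_smul, ← hc_def, sub_self]
    exact sub_eq_zero.mp (Linj _ h)
  have K1 : ∀ z w x : A, star a (bull z (star a (bull w x))) = c • star z (bull w x) := by
    intro z w x
    rw [I3 z (star a (bull w x)), SL (bull w x), map_smul]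
  have TTself : ∀ z x : A, star a (bull z (star a (bull z x))) = (c * q z) • x := by
    intro z x
    rw [K1, hq, smul_smul]
  have Tcomm : ∀ z w x : A, star a (bull z (star a (bull w x)))
      = star a (bull w (star a (bull z x))) + (c * QuadraticMap.polar ⇑q z w) • x := by
    intro z w x
    rw [K1, K1]
    have hx : star z (bull w x) = star w (bull z x) + QuadraticMap.polar ⇑q z w • x := by
      have h := cross z w x
      rw [← h, add_comm (star z (bull w x)) (star w (bull z x)), ← add_assoc,
        addA, zero_add]
    rw [hx, smul_add, smul_smul]
  -- surjectivity of z ↦ star a (bull z y₀)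
  set φ : A →ₗ[K] A := (star a).comp (bull.flip y₀) with hφ_def
  have hφ : ∀ z, φ z = star a (bull z y₀) := fun z => rfl
  have hinj : Function.Injective φ := by
    rw [← LinearMap.ker_eq_bot, LinearMap.ker_eq_bot']
    intro z hz
    by_contra h
    exact hstar a _ ha0 (hbull z y₀ h hy₀) hz
  have hsurj := LinearMap.injective_iff_surjective.mp hinj
  -- notation
  set Vy := star a (bull v y₀) with hVy
  set Uy := star a (bull u y₀) with hUy
  set W := star a (bull u Vy) with hW
  obtain ⟨z₁, hz₁⟩ := hsurj W
  rw [hφ] at hz₁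
  set p := q u with hp
  set s := q v with hs
  set β := QuadraticMap.polar ⇑q u v with hβ_def
  set m₁ := q z₁ with hm
  set r := QuadraticMap.polar ⇑q z₁ v with hr
  set t := QuadraticMap.polar ⇑q z₁ u with ht
  -- the fundamental equation
  have E2 : star a (bull z₁ W) = (c * m₁) • y₀ := by
    rw [← hz₁, TTself z₁ y₀]
  have step4 : star a (bull v Vy) = (c * s) • y₀ := TTself v y₀
  have step3 : star a (bull v W) = (c * s) • Uy + (c * β) • Vy := by
    rw [hW, Tcomm v u Vy, step4, map_smul, map_smul, ← hUy,
      QuadraticMap.polar_comm ⇑q v u, ← hβ_def]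
  have step2 : star a (bull z₁ Vy) = (c * s) • Uy + (c * β) • Vy + (c * r) • y₀ := by
    rw [hVy, Tcomm z₁ v y₀, ← hVy, hz₁, step3, ← hr]
  have E1 : star a (bull z₁ W)
      = (c * s) • ((c * p) • y₀) + (c * β) • W + (c * r) • Uy + (c * t) • Vy := by
    have huu : star a (bull u Uy) = (c * p) • y₀ := TTself u y₀
    rw [hW, Tcomm z₁ u Vy, ← hW, ← ht, step2]
    simp only [map_add, map_smul]
    rw [huu, ← hUy, ← hW]
  have EQ : (c * m₁) • y₀
      = (c * β) • W + ((c * s) • ((c * p) • y₀) + (c * r) • Uy + (c * t) • Vy) := by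
    rw [← E2, E1]; abel
  have hcβ : c * β ≠ 0 := mul_ne_zero hc hβ
  have hW2 : (c * β) • W
      = (c * m₁) • y₀ + ((c * s) • ((c * p) • y₀) + (c * r) • Uy + (c * t) • Vy) :=
    moveA _ _ _ EQ
  set α : K := (c * β)⁻¹ * (c * m₁) + (c * β)⁻¹ * (c * s * (c * p)) with hα
  set γ : K := (c * β)⁻¹ * (c * r) with hγ
  set δ : K := (c * β)⁻¹ * (c * t) with hδ
  have hWs : W = α • y₀ + γ • Uy + δ • Vy := by
    have h := congrArg (fun x => (c * β)⁻¹ • x) hW2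
    simp only [smul_add, smul_smul] at h
    rw [inv_mul_cancel₀ hcβ, one_smul] at h
    rw [h, hα, hγ, hδ]
    match_scalars <;> ring
  -- stage 2
  set zs := u + (δ * c⁻¹) • a with hzs_def
  set zss := v + (γ * c⁻¹) • a with hzss_def
  have Tzs : ∀ x : A, star a (bull zs x) = star a (bull u x) + δ • x := by
    intro x
    rw [hzs_def, map_add, LinearMap.add_apply, map_add, map_smul,
      LinearMap.smul_apply, map_smul, hq a x, smul_smul, mul_assoc,
      inv_mul_cancel₀ hc, mul_one]
  have Tzss : ∀ x : A, star a (bull zss x) = star a (bull v x) + γ • x := by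
    intro x
    rw [hzss_def, map_add, LinearMap.add_apply, map_add, map_smul,
      LinearMap.smul_apply, map_smul, hq a x, smul_smul, mul_assoc,
      inv_mul_cancel₀ hc, mul_one]
  have h1 : star a (bull zs (star a (bull zss y₀))) = (α + δ * γ) • y₀ := by
    rw [Tzss y₀]
    simp only [map_add, map_smul]
    rw [Tzs, Tzs, ← hVy, ← hUy, ← hW, hWs]
    match_scalars
    · ring
    · linear_combination (c * c⁻¹ * β⁻¹ * r) * h2K
    · linear_combination (c * c⁻¹ * β⁻¹ * t) * h2K
  have hzs0 : zs ≠ 0 := by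
    rw [hzs_def]
    intro h0
    have hu : u = -((δ * c⁻¹) • a) := eq_neg_of_add_eq_zero_left h0
    refine hβ ?_
    rw [hβ_def, hu, QuadraticMap.polar_neg_left, QuadraticMap.polar_smul_left,
      ha_rad v, smul_zero, neg_zero]
  have hπ : c * q zs ≠ 0 := mul_ne_zero hc (aniso zs hzs0)
  set e : K := α + δ * γ with he
  have main : (c * q zs) • (star a (bull zss y₀)) = e • (star a (bull zs y₀)) := by
    have h3 := congrArg (fun w => star a (bull zs w)) h1
    simp only [map_smul] at h3
    rw [TTself zs] at h3
    exact h3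
  set w := (c * q zs) • zss + e • zs with hw_def
  have hwT : star a (bull w y₀) = 0 := by
    rw [hw_def]
    simp only [map_add, map_smul, LinearMap.add_apply, LinearMap.smul_apply]
    rw [main]
    exact addA _
  have hw0 : w ≠ 0 := by
    intro h0
    have hpol : QuadraticMap.polar ⇑q w u = 0 := by
      rw [h0]
      simp [QuadraticMap.polar]
    have h4 : QuadraticMap.polar ⇑q zss u = β := by
      rw [hzss_def, QuadraticMap.polar_add_left, QuadraticMap.polar_smul_left,
        ha_rad u, smul_zero, add_zero, QuadraticMap.polar_comm ⇑q v u, ← hβ_def]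
    have h5 : QuadraticMap.polar ⇑q zs u = 0 := by
      rw [hzs_def, QuadraticMap.polar_add_left, QuadraticMap.polar_smul_left,
        ha_rad u, smul_zero, add_zero, QuadraticMap.polar_self, two_nsmul]
      linear_combination q u * h2K
    rw [hw_def, QuadraticMap.polar_add_left, QuadraticMap.polar_smul_left,
      QuadraticMap.polar_smul_left, h4, h5, smul_zero, add_zero, smul_eq_mul] at hpol
    exact hβ ((mul_eq_zero.mp hpol).resolve_left hπ)
  exact hstar a _ ha0 (hbull w y₀ hw0 hy₀) hwT
end

section
/- Let (A, ⋆, •) be a 2-dimensional LDB division algebra over K whose attached quadratic form q represents 1, and suppose it is e-standard for some e with q(e)=1 (so e ⋆ − = id_A). Then L := {x ⋆ − : x ∈ A} ⊆ End_K(A) is a 2-dimensional commutative field extension of K·id_A in which every nonzero element is invertible, and the map x ↦ x ⋆ − is a K-linear isomorphism from A onto L. -/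
theorem stmt_16 (K A : Type*) [Field K] [AddCommGroup A] [Module K A]
    [FiniteDimensional K A] [Nontrivial A]
    (star bull : A →ₗ[K] A →ₗ[K] A)
    (hstar : ∀ x y : A, x ≠ 0 → y ≠ 0 → star x y ≠ 0)
    (hbull : ∀ x y : A, x ≠ 0 → y ≠ 0 → bull x y ≠ 0)
    (q : QuadraticForm K A)
    (hq : ∀ x y : A, star x (bull x y) = q x • y)
    (hdim : Module.finrank K A = 2)
    (e : A) (he_q : q e = 1) (he_std : ∀ y : A, star e y = y) :
    Function.Injective (fun x : A => (star x : Module.End K A)) ∧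
    (∃ x : A, (star x : Module.End K A) = 1) ∧
    (∀ x y : A, ∃ z : A,
      (star x : Module.End K A) * (star y : Module.End K A) = star z) ∧
    (∀ x y : A, (star x : Module.End K A) * (star y : Module.End K A)
      = (star y : Module.End K A) * (star x : Module.End K A)) ∧
    (∀ x : A, x ≠ 0 → IsUnit (star x : Module.End K A)) := by
  -- e ≠ 0
  have he0 : e ≠ 0 := by
    intro h
    rw [h, map_zero] at he_q
    exact one_ne_zero he_q.symm
  -- star is injective
  have hinj : Function.Injective (fun x : A => (star x : Module.End K A)) := by
    intro x y hxy
    by_contra hne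
    have hsub : x - y ≠ 0 := sub_ne_zero.mpr hne
    have : star (x - y) e ≠ 0 := hstar _ _ hsub he0
    apply this
    simp only at hxy
    rw [map_sub]
    simp [hxy]
  -- star e = 1
  have hone : (star e : Module.End K A) = 1 := by
    ext y; exact he_std y
  -- each star x for x ≠ 0 is a unit
  have hunit : ∀ x : A, x ≠ 0 → IsUnit (star x : Module.End K A) := by
    intro x hx
    rw [LinearMap.isUnit_iff_ker_eq_bot]
    rw [LinearMap.ker_eq_bot']
    intro m hm
    by_contra hm0
    exact hstar x m hx hm0 hm
  -- range of star as submodule of End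
  set S : A →ₗ[K] Module.End K A := star with hS
  have hrange : Module.finrank K (LinearMap.range S) = 2 := by
    rw [LinearMap.finrank_range_of_inj hinj, hdim]
  -- find f in range not a scalar multiple of 1
  have hex : ∃ x : A, ∀ a : K, a • (1 : Module.End K A) ≠ S x := by
    by_contra hcon
    push_neg at hcon
    have hle : LinearMap.range S ≤ Submodule.span K {(1 : Module.End K A)} := by
      rintro g ⟨x, rfl⟩
      obtain ⟨a, ha⟩ := hcon x
      rw [← ha]
      exact Submodule.smul_mem _ _ (Submodule.mem_span_singleton_self _)
    have := Submodule.finrank_mono hle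
    rw [hrange] at this
    have hone_ne : (1 : Module.End K A) ≠ 0 := by
      obtain ⟨a, ha⟩ := exists_ne (0 : A)
      intro h
      apply ha
      have := congrArg (fun g : Module.End K A => g a) h
      simpa using this
    have h1 : Module.finrank K (Submodule.span K {(1 : Module.End K A)}) ≤ 1 := by
      rw [finrank_span_singleton hone_ne]
    omega
  obtain ⟨x₀, hx₀⟩ := hex
  set f : Module.End K A := S x₀ with hf
  have hind : LinearIndependent K ![(1 : Module.End K A), f] := by
    rw [LinearIndependent.pair_iff' (one_ne_zero)]
    exact hx₀
  -- span {1, f} = range S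
  have hspan : Submodule.span K {(1 : Module.End K A), f} = LinearMap.range S := by
    apply Submodule.eq_of_le_of_finrank_le
    · rw [Submodule.span_le]
      rintro g hg
      rcases hg with rfl | rfl
      · exact ⟨e, hone⟩
      · exact ⟨x₀, rfl⟩
    · rw [hrange]
      have : Module.finrank K (Submodule.span K (Set.range ![(1 : Module.End K A), f])) = 2 := by
        rw [finrank_span_eq_card hind]
        simp
      rw [show (Set.range ![(1 : Module.End K A), f]) = {(1 : Module.End K A), f} by
        ext g; simp [Matrix.range_cons, Matrix.range_empty]; tauto] at this
      omega
  -- Cayley-Hamilton: f^2 ∈ span {1, f}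
  have hCH : f * f ∈ Submodule.span K {(1 : Module.End K A), f} := by
    have hch := LinearMap.aeval_self_charpoly f
    have hmonic := LinearMap.charpoly_monic f
    have hdeg : (LinearMap.charpoly f).natDegree = 2 := by
      rw [LinearMap.charpoly_natDegree, hdim]
    rw [Polynomial.aeval_eq_sum_range] at hch
    rw [hdeg] at hch
    have hlead : (LinearMap.charpoly f).coeff 2 = 1 := by
      have := hmonic.coeff_natDegree
      rwa [hdeg] at this
    rw [Finset.sum_range_succ, Finset.sum_range_succ, Finset.sum_range_one, hlead,
      one_smul] at hch
    have h2 : f ^ 2 = -((LinearMap.charpoly f).coeff 0 • (f ^ 0)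
        + (LinearMap.charpoly f).coeff 1 • f ^ 1) :=
      eq_neg_of_add_eq_zero_right hch
    rw [← pow_two, h2]
    apply Submodule.neg_mem
    apply Submodule.add_mem
    · apply Submodule.smul_mem
      rw [pow_zero]
      exact Submodule.subset_span (Or.inl rfl)
    · apply Submodule.smul_mem
      rw [pow_one]
      exact Submodule.subset_span (Or.inr rfl)
  -- each element of range S decomposes as a • 1 + b • f
  have hdecomp : ∀ x : A, ∃ a b : K, (S x : Module.End K A) = a • 1 + b • f := by
    intro x
    have : (S x : Module.End K A) ∈ Submodule.span K {(1 : Module.End K A), f} := by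
      rw [hspan]; exact ⟨x, rfl⟩
    rw [Submodule.mem_span_pair] at this
    obtain ⟨a, b, hab⟩ := this
    exact ⟨a, b, hab.symm⟩
  refine ⟨hinj, ⟨e, hone⟩, ?_, ?_, hunit⟩
  · intro x y
    obtain ⟨a, b, hx⟩ := hdecomp x
    obtain ⟨c, d, hy⟩ := hdecomp y
    have hmem : (star x : Module.End K A) * star y ∈ LinearMap.range S := by
      rw [← hspan]
      have hxS : (star x : Module.End K A) = S x := rfl
      have hyS : (star y : Module.End K A) = S y := rfl
      rw [hxS, hyS, hx, hy]
      have hexp : (a • 1 + b • f) * (c • 1 + d • f)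
          = (a * c) • (1 : Module.End K A) + (a * d + b * c) • f + (b * d) • (f * f) := by
        simp only [mul_add, add_mul, smul_mul_smul_comm, mul_one, one_mul,
          add_smul]
        abel
      rw [hexp]
      refine Submodule.add_mem _ (Submodule.add_mem _ ?_ ?_) ?_
      · exact Submodule.smul_mem _ _ (Submodule.subset_span (Or.inl rfl))
      · exact Submodule.smul_mem _ _ (Submodule.subset_span (Or.inr rfl))
      · exact Submodule.smul_mem _ _ hCH
    obtain ⟨z, hz⟩ := hmem
    exact ⟨z, hz.symm⟩
  · intro x y
    obtain ⟨a, b, hx⟩ := hdecomp x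
    obtain ⟨c, d, hy⟩ := hdecomp y
    have hxS : (star x : Module.End K A) = S x := rfl
    have hyS : (star y : Module.End K A) = S y := rfl
    rw [hxS, hyS, hx, hy]
    simp only [mul_add, add_mul, smul_mul_smul_comm, mul_one, one_mul]
    ring_nf
    abel
end

section
/- Let K be a field of characteristic 2 and let (A, ⋆, •) be a 4-dimensional non-degenerate LDB division algebra over K whose attached quadratic form q represents 1. Then the Arf invariant of q is 0; consequently q is equivalent to [1, ab] ⊥ [a, b] for some a, b ∈ K*, i.e. q is equivalent to the norm form of the quaternion algebra C[a,b]. -/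
lemma Gsq (K A : Type*) [Field K] [AddCommGroup A] [Module K A] (h2 : (2:K) = 0)
    (a b : K) (Pu Pv E : Module.End K A)
    (hPuPv : Pu * Pv = E) (hvu : Pv * Pu = 1 + E)
    (hPu : Pu * Pu = a • 1) (hPv : Pv * Pv = b • 1)
    (hPuE : Pu * E = a • Pv) (hEPu : E * Pu = Pu + a • Pv)
    (hPvE : Pv * E = b • Pu + Pv) (hEPv : E * Pv = b • Pu)
    (hEE : E * E = E + (a*b) • 1) (w z x y : K) :
    (w • 1 + z • E + x • Pu + y • Pv) * (w • 1 + z • E + x • Pu + y • Pv) =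
      z • (w • 1 + z • E + x • Pu + y • Pv) +
        (w*w + w*z + a*b*(z*z) + a*(x*x) + x*y + b*(y*y)) • 1 := by
  simp only [add_mul, mul_add, smul_mul_assoc, mul_smul_comm, smul_smul, one_mul, mul_one,
    hPuPv, hvu, hPu, hPv, hPuE, hEPu, hPvE, hEPv, hEE]
  match_scalars
  · linear_combination (-(w*z)) * h2
  · linear_combination (x*y + w*z) * h2
  · linear_combination (w*x + b*y*z) * h2
  · linear_combination (w*y + a*x*z) * h2

lemma nqaniso (K : Type*) [Field K] (h2 : (2:K) = 0) (a b β : K) (ha : a ≠ 0) (hb : b ≠ 0)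
    (ANISO : ∀ s t g k : K, s*s + s*t + β*(t*t) + a*(g*g) + g*k + b*(k*k) = 0 →
      s = 0 ∧ t = 0 ∧ g = 0 ∧ k = 0)
    (w z x y : K) (hν : w*w + w*z + a*b*(z*z) + a*(x*x) + x*y + b*(y*y) = 0) :
    w = 0 ∧ z = 0 ∧ x = 0 ∧ y = 0 := by
  set d : K := a*(x*x) + x*y + b*(y*y) with hd
  set X : K := x*w + b*z*y with hX
  set Y : K := a*x*z + y*w + y*z with hY
  have h6 := ANISO d 0 X Y (by
    rw [hd, hX, hY]
    linear_combination (a*x*x + x*y + b*y*y) * hν +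
      (2*a*b*w*x*y*z + a*b*x*y*z*z + b*w*y*y*z + b*y*y*z*z) * h2)
  have hd0 : d = 0 := h6.1
  have h7 := ANISO 0 0 x y (by rw [hd] at hd0; linear_combination hd0)
  obtain ⟨-, -, hx0, hy0⟩ := h7
  subst hx0; subst hy0
  have h8 := ANISO 0 0 w (a*z) (by linear_combination a * hν)
  obtain ⟨-, -, hw0, haz⟩ := h8
  subst hw0
  refine ⟨rfl, ?_, rfl, rfl⟩
  exact (mul_eq_zero.mp haz).resolve_left ha

lemma get_lambda (K A : Type*) [Field K] [AddCommGroup A] [Module K A]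
    [FiniteDimensional K A] (h2 : (2:K) = 0)
    (hdim : Module.finrank K A = 4) (a b β : K) (ha : a ≠ 0) (hb : b ≠ 0)
    (Pu Pv M : Module.End K A)
    (hPu : Pu * Pu = a • 1) (hPv : Pv * Pv = b • 1)
    (huv : Pu * Pv + Pv * Pu = 1)
    (hMu : M * Pu + Pu * M = Pu) (hMv : M * Pv + Pv * M = Pv)
    (hM : M * M = M + β • 1)
    (e : A) (he : e ≠ 0)
    (ANISO : ∀ s t g k : K, s*s + s*t + β*(t*t) + a*(g*g) + g*k + b*(k*k) = 0 →
      s = 0 ∧ t = 0 ∧ g = 0 ∧ k = 0) :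
    ∃ lam : K, lam * lam + lam = β + a * b := by
  have addself : ∀ T : Module.End K A, T + T = 0 := fun T => by
    rw [← two_smul K T, h2, zero_smul]
  have negself : ∀ T : Module.End K A, -T = T := fun T =>
    neg_eq_of_add_eq_zero_left (addself T)
  set E : Module.End K A := Pu * Pv with hE
  have hPuPv : Pu * Pv = E := rfl
  have hvu : Pv * Pu = 1 + E := by
    have h := eq_sub_of_add_eq' huv
    rwa [sub_eq_add_neg, negself] at h
  have hPuE : Pu * E = a • Pv := by
    rw [hE, ← mul_assoc, hPu, smul_mul_assoc, one_mul]
  have hEPu : E * Pu = Pu + a • Pv := by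
    rw [hE, mul_assoc, hvu, mul_add, mul_one, hPuE]
  have hEPv : E * Pv = b • Pu := by
    rw [hE, mul_assoc, hPv, mul_smul_comm, mul_one]
  have hPvE : Pv * E = b • Pu + Pv := by
    rw [hE, ← mul_assoc, hvu, add_mul, one_mul, hEPv, add_comm]
  have hEE : E * E = E + (a*b) • 1 := by
    rw [hE, ← mul_assoc, mul_assoc Pu Pv Pu, hvu, mul_add, mul_one, add_mul, hPuE,
      smul_mul_assoc, hPv, smul_smul, ← hE]
  have hMu' : M * Pu = Pu + Pu * M := by
    have h := eq_sub_of_add_eq hMu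
    rwa [sub_eq_add_neg, negself] at h
  have hMv' : M * Pv = Pv + Pv * M := by
    have h := eq_sub_of_add_eq hMv
    rwa [sub_eq_add_neg, negself] at h
  have hME : M * E = E * M := by
    calc M * E = (M * Pu) * Pv := by rw [hE, mul_assoc]
    _ = Pu * Pv + Pu * (M * Pv) := by rw [hMu', add_mul, mul_assoc]
    _ = Pu * Pv + (Pu * Pv + (Pu * Pv) * M) := by rw [hMv', mul_add, mul_assoc]
    _ = (Pu * Pv) * M := by rw [← add_assoc, addself, zero_add]
    _ = E * M := by rw [hE]
  set S : Module.End K A := M + E with hS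
  have hSS : S * S = S + (β + a*b) • 1 := by
    rw [hS, add_mul, mul_add, mul_add, hM, hME, hEE]
    match_scalars <;> first | ring1 | linear_combination h2 | linear_combination (-1 : K) * h2
  have hSPu : S * Pu = Pu * S := by
    rw [hS, add_mul, mul_add, hMu', hEPu, hPuE]
    match_scalars <;> first | ring1 | linear_combination h2 | linear_combination (-1 : K) * h2
  have hSPv : S * Pv = Pv * S := by
    rw [hS, add_mul, mul_add, hMv', hEPv, hPvE]
    match_scalars <;> first | ring1 | linear_combination h2 | linear_combination (-1 : K) * h2
  have hSE : S * E = E * S := by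
    rw [hS, add_mul, mul_add, hME]
  -- the linear map r ↦ (r0•1 + r1•E + r2•Pu + r3•Pv) e
  set Θ : (Fin 4 → K) →ₗ[K] A :=
    (Pi.basisFun K (Fin 4)).constr K ![e, E e, Pu e, Pv e] with hΘ
  have hΘapp : ∀ r : Fin 4 → K,
      Θ r = (r 0 • 1 + r 1 • E + r 2 • Pu + r 3 • Pv) e := by
    intro r
    rw [hΘ, Module.Basis.constr_apply_fintype, Fin.sum_univ_four]
    simp [Pi.basisFun_equivFun, LinearMap.add_apply, LinearMap.smul_apply,
      Module.End.one_apply]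
  have hGapp : ∀ r : Fin 4 → K, ∀ v : A,
      (r 0 • 1 + r 1 • E + r 2 • Pu + r 3 • Pv) v
        = r 0 • v + r 1 • E v + r 2 • Pu v + r 3 • Pv v := by
    intro r v
    simp [LinearMap.add_apply, LinearMap.smul_apply, Module.End.one_apply]
  have hGsq : ∀ r : Fin 4 → K,
      (r 0 • 1 + r 1 • E + r 2 • Pu + r 3 • Pv) * (r 0 • 1 + r 1 • E + r 2 • Pu + r 3 • Pv)
      = r 1 • (r 0 • 1 + r 1 • E + r 2 • Pu + r 3 • Pv) +
        (r 0 * r 0 + r 0 * r 1 + a*b*(r 1 * r 1) + a*(r 2 * r 2) + r 2 * r 3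
          + b*(r 3 * r 3)) • 1 :=
    fun r => Gsq K A h2 a b Pu Pv E hPuPv hvu hPu hPv hPuE hEPu hPvE hEPv hEE
      (r 0) (r 1) (r 2) (r 3)
  have hΘinj : Function.Injective Θ := by
    rw [← LinearMap.ker_eq_bot, LinearMap.ker_eq_bot']
    intro r hr
    rw [hΘapp] at hr
    have h0 : ((r 0 • 1 + r 1 • E + r 2 • Pu + r 3 • Pv) *
        (r 0 • 1 + r 1 • E + r 2 • Pu + r 3 • Pv)) e = 0 := by
      rw [Module.End.mul_apply, hr, map_zero]
    rw [hGsq r] at h0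
    rw [LinearMap.add_apply, LinearMap.smul_apply, hr, smul_zero, zero_add,
      LinearMap.smul_apply, Module.End.one_apply] at h0
    have hν : r 0 * r 0 + r 0 * r 1 + a*b*(r 1 * r 1) + a*(r 2 * r 2) + r 2 * r 3
        + b*(r 3 * r 3) = 0 := by
      rcases smul_eq_zero.mp h0 with h | h
      · exact h
      · exact absurd h he
    obtain ⟨h0', h1', h2', h3'⟩ := nqaniso K h2 a b β ha hb ANISO (r 0) (r 1) (r 2) (r 3) hν
    funext i
    fin_cases i <;> assumption
  have hΘsurj : Function.Surjective Θ :=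
    (LinearMap.injective_iff_surjective_of_finrank_eq_finrank
      (by rw [Module.finrank_fin_fun, hdim])).mp hΘinj
  obtain ⟨r, hr⟩ := hΘsurj (S e)
  rw [hΘapp] at hr
  set G : Module.End K A := r 0 • 1 + r 1 • E + r 2 • Pu + r 3 • Pv with hG
  -- S commutes with G
  have hSG : S * G = G * S := by
    rw [hG]
    simp only [mul_add, add_mul, mul_smul_comm, smul_mul_assoc, mul_one, one_mul,
      hSE, hSPu, hSPv]
  by_contra hno
  push_neg at hno
  set ν : K := r 0 * r 0 + r 0 * r 1 + a*b*(r 1 * r 1) + a*(r 2 * r 2) + r 2 * r 3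
      + b*(r 3 * r 3) with hνdef
  have k1 : (G * G) e = G e + (β + a*b) • e := by
    calc (G * G) e = G (S e) := by rw [Module.End.mul_apply, hr]
    _ = (G * S) e := by rw [Module.End.mul_apply]
    _ = S (S e) := by rw [← hSG, Module.End.mul_apply, hr]
    _ = (S * S) e := by rw [Module.End.mul_apply]
    _ = S e + (β + a*b) • e := by
        rw [hSS, LinearMap.add_apply, LinearMap.smul_apply, Module.End.one_apply]
    _ = G e + (β + a*b) • e := by rw [← hr]
  have k2 : (G * G) e = r 1 • G e + ν • e := by
    rw [hG, hGsq r, LinearMap.add_apply, LinearMap.smul_apply, LinearMap.smul_apply,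
      Module.End.one_apply, hνdef]
  have heq : G e + (β + a*b) • e = r 1 • G e + ν • e := k1.symm.trans k2
  by_cases hz1 : r 1 = 1
  · rw [hz1, one_smul] at heq
    have hcan : (β + a*b) • e = ν • e := add_left_cancel heq
    have hνc : ν = β + a*b := by
      have h3 : (ν - (β + a*b)) • e = 0 := by rw [sub_smul, hcan, sub_self]
      rcases smul_eq_zero.mp h3 with h | h
      · exact sub_eq_zero.mp h
      · exact absurd h he
    rw [hνdef, hz1] at hνc
    have := ANISO (r 0) 1 (r 2) (r 3) (by linear_combination hνc + β * h2)
    exact one_ne_zero this.2.1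
  · have hne : r 1 - 1 ≠ 0 := sub_ne_zero_of_ne hz1
    set μ : K := (β + a*b - ν) / (r 1 - 1) with hμ
    have hGe : G e = μ • e := by
      have hsub : (r 1 - 1) • G e = (β + a*b - ν) • e := by
        rw [sub_smul, sub_smul, one_smul, sub_eq_sub_iff_add_eq_add,
          add_comm ((β + a*b) • e)]
        exact heq.symm
      rw [hμ, div_eq_mul_inv, mul_comm, mul_smul, ← hsub, smul_smul,
        inv_mul_cancel₀ hne, one_smul]
    have hSe : S e = μ • e := by rw [← hr, hGe]
    have hscal : μ * μ - μ - (β + a*b) = 0 := by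
      have h1 : (S * S) e = (μ * μ) • e := by
        rw [Module.End.mul_apply, hSe, map_smul, hSe, smul_smul]
      have h2' : (S * S) e = (μ + (β + a*b)) • e := by
        rw [hSS, LinearMap.add_apply, LinearMap.smul_apply, Module.End.one_apply, hSe]
        module
      have h3 : (μ * μ - μ - (β + a*b)) • e = 0 := by
        rw [sub_smul, sub_smul, h1.symm.trans h2', add_smul]
        abel
      rcases smul_eq_zero.mp h3 with h | h
      · exact h
      · exact absurd h he
    exact hno μ (by linear_combination hscal + μ * h2)

/-- The binary quadratic form `[a,b] : (x,y) ↦ a x² + x y + b y²`. -/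
noncomputable def binQF (K : Type*) [Field K] (a b : K) : QuadraticForm K (K × K) :=
  LinearMap.BilinMap.toQuadraticMap
  ((LinearMap.mk₂ K (fun p r : K × K => a * p.1 * r.1 + p.1 * r.2 + b * p.2 * r.2)
    (fun p p' r => by simp only [Prod.fst_add, Prod.snd_add]; ring)
    (fun c p r => by simp only [Prod.smul_fst, Prod.smul_snd, smul_eq_mul]; ring)
    (fun p r r' => by simp only [Prod.fst_add, Prod.snd_add]; ring)
    (fun c p r => by
      simp only [Prod.smul_fst, Prod.smul_snd, smul_eq_mul]; ring)) : LinearMap.BilinMap K (K × K) K)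

theorem stmt_18 (K A : Type*) [Field K] [AddCommGroup A] [Module K A]
    [FiniteDimensional K A] [Nontrivial A] [CharP K 2]
    (star bull : A →ₗ[K] A →ₗ[K] A)
    (hstar : ∀ x y : A, x ≠ 0 → y ≠ 0 → star x y ≠ 0)
    (hbull : ∀ x y : A, x ≠ 0 → y ≠ 0 → bull x y ≠ 0)
    (q : QuadraticForm K A)
    (hq : ∀ x y : A, star x (bull x y) = q x • y)
    (hnd : ∀ x : A, (∀ y : A, QuadraticMap.polar ⇑q x y = 0) → x = 0)
    (hdim : Module.finrank K A = 4)
    (hrep : ∃ e : A, q e = 1) :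
    ∃ a b : K, a ≠ 0 ∧ b ≠ 0 ∧
      QuadraticMap.Equivalent q
        ((binQF K 1 (a * b)).prod (binQF K a b)) := by
  classical
  have h2K : (2:K) = 0 := by
    have := CharP.cast_eq_zero K 2
    exact_mod_cast this
  have addK : ∀ k : K, k + k = 0 := fun k => by linear_combination k * h2K
  have anis : ∀ x : A, q x = 0 → x = 0 := by
    intro x hx
    by_contra hx0
    obtain ⟨y, hy⟩ := exists_ne (0 : A)
    have h1 := hq x y
    rw [hx, zero_smul] at h1
    exact hstar x (bull x y) hx0 (hbull x y hx0 hy) h1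
  obtain ⟨e, he1⟩ := hrep
  have he0 : e ≠ 0 := fun h => by rw [h, map_zero] at he1; exact one_ne_zero he1.symm
  have pself : ∀ x : A, QuadraticMap.polar ⇑q x x = 0 := fun x => by
    rw [QuadraticMap.polar_self, two_smul]
    exact addK _
  -- construct f
  obtain ⟨f0, hf0⟩ : ∃ y, QuadraticMap.polar ⇑q e y ≠ 0 := by
    by_contra h; push_neg at h; exact he0 (hnd e h)
  obtain ⟨f, pef⟩ : ∃ f : A, QuadraticMap.polar ⇑q e f = 1 :=
    ⟨(QuadraticMap.polar ⇑q e f0)⁻¹ • f0, by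
      rw [QuadraticMap.polar_smul_right, smul_eq_mul, inv_mul_cancel₀ hf0]⟩
  -- construct u
  obtain ⟨u, hu0, peu, pfu⟩ : ∃ u : A, u ≠ 0 ∧ QuadraticMap.polar ⇑q e u = 0 ∧
      QuadraticMap.polar ⇑q f u = 0 := by
    set ψ : A →ₗ[K] K × K :=
      LinearMap.prod (QuadraticMap.polarBilin q e) (QuadraticMap.polarBilin q f) with hψ
    have hker : LinearMap.ker ψ ≠ ⊥ := by
      intro hbot
      have h1 := LinearMap.finrank_range_add_finrank_ker ψ
      rw [hbot, finrank_bot, add_zero, hdim] at h1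
      have hle : Module.finrank K (LinearMap.range ψ) ≤ Module.finrank K (K × K) :=
        Submodule.finrank_le _
      have : Module.finrank K (K × K) = 2 := by
        simp [Module.finrank_prod, Module.finrank_self]
      omega
    obtain ⟨u, hu, hu0⟩ := (Submodule.ne_bot_iff _).mp hker
    rw [LinearMap.mem_ker, hψ, LinearMap.prod_apply] at hu
    have h1 : QuadraticMap.polar ⇑q e u = 0 := congrArg Prod.fst hu
    have h2 : QuadraticMap.polar ⇑q f u = 0 := congrArg Prod.snd hu
    exact ⟨u, hu0, h1, h2⟩
  -- construct v
  obtain ⟨v0, pev0, pfv0, puv0⟩ : ∃ w : A, QuadraticMap.polar ⇑q e w = 0 ∧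
      QuadraticMap.polar ⇑q f w = 0 ∧ QuadraticMap.polar ⇑q u w ≠ 0 := by
    by_contra hcon
    push_neg at hcon
    refine hu0 (hnd u fun y => ?_)
    have h1 : QuadraticMap.polar ⇑q e
        (y + QuadraticMap.polar ⇑q e y • f + QuadraticMap.polar ⇑q f y • e) = 0 := by
      rw [QuadraticMap.polar_add_right, QuadraticMap.polar_add_right,
        QuadraticMap.polar_smul_right, QuadraticMap.polar_smul_right, pef, pself]
      simp [addK]
    have h2 : QuadraticMap.polar ⇑q f
        (y + QuadraticMap.polar ⇑q e y • f + QuadraticMap.polar ⇑q f y • e) = 0 := by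
      rw [QuadraticMap.polar_add_right, QuadraticMap.polar_add_right,
        QuadraticMap.polar_smul_right, QuadraticMap.polar_smul_right, pself,
        QuadraticMap.polar_comm ⇑q f e, pef]
      simp [addK]
    have h3 := hcon _ h1 h2
    rw [QuadraticMap.polar_add_right, QuadraticMap.polar_add_right,
      QuadraticMap.polar_smul_right, QuadraticMap.polar_smul_right,
      QuadraticMap.polar_comm ⇑q u f, pfu, QuadraticMap.polar_comm ⇑q u e, peu] at h3
    simpa using h3
  obtain ⟨v, puv, pev, pfv⟩ : ∃ w : A, QuadraticMap.polar ⇑q u w = 1 ∧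
      QuadraticMap.polar ⇑q e w = 0 ∧ QuadraticMap.polar ⇑q f w = 0 :=
    ⟨(QuadraticMap.polar ⇑q u v0)⁻¹ • v0,
      by rw [QuadraticMap.polar_smul_right, smul_eq_mul, inv_mul_cancel₀ puv0],
      by rw [QuadraticMap.polar_smul_right, pev0, smul_zero],
      by rw [QuadraticMap.polar_smul_right, pfv0, smul_zero]⟩
  have hv0 : v ≠ 0 := by
    intro h
    rw [h, QuadraticMap.polar_zero_right] at puv
    exact one_ne_zero puv.symm
  have hf0' : f ≠ 0 := by
    intro h
    rw [h, QuadraticMap.polar_zero_right] at pef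
    exact one_ne_zero pef.symm
  set a : K := q u with hadef
  set b : K := q v with hbdef
  set β : K := q f with hβdef
  have ha : a ≠ 0 := fun h => hu0 (anis u h)
  have hb : b ≠ 0 := fun h => hv0 (anis v h)
  -- symmetric polar values
  have pfe : QuadraticMap.polar ⇑q f e = 1 := by rw [QuadraticMap.polar_comm]; exact pef
  have pue : QuadraticMap.polar ⇑q u e = 0 := by rw [QuadraticMap.polar_comm]; exact peu
  have puf : QuadraticMap.polar ⇑q u f = 0 := by rw [QuadraticMap.polar_comm]; exact pfu
  have pve : QuadraticMap.polar ⇑q v e = 0 := by rw [QuadraticMap.polar_comm]; exact pev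
  have pvf : QuadraticMap.polar ⇑q v f = 0 := by rw [QuadraticMap.polar_comm]; exact pfv
  have pvu : QuadraticMap.polar ⇑q v u = 1 := by rw [QuadraticMap.polar_comm]; exact puv
  have qadd : ∀ x y : A, q (x + y) = q x + q y + QuadraticMap.polar ⇑q x y := by
    intro x y
    simp only [QuadraticMap.polar]
    ring
  have qval : ∀ s t g k : K,
      q (s • e + t • f + g • u + k • v)
        = s*s + s*t + β*(t*t) + a*(g*g) + g*k + b*(k*k) := by
    intro s t g k
    rw [qadd, qadd, qadd]
    simp only [QuadraticMap.map_smul, QuadraticMap.polar_add_left,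
      QuadraticMap.polar_smul_left, QuadraticMap.polar_smul_right, smul_eq_mul,
      pself, pef, pfe, peu, pue, puf, pfu, pev, pve, pfv, pvf, puv, pvu,
      ← hadef, ← hbdef, ← hβdef, he1]
    ring
  have polcombo : ∀ (x : A) (s t g k : K),
      QuadraticMap.polar ⇑q x (s • e + t • f + g • u + k • v)
        = s * QuadraticMap.polar ⇑q x e + t * QuadraticMap.polar ⇑q x f
          + g * QuadraticMap.polar ⇑q x u + k * QuadraticMap.polar ⇑q x v := by
    intro x s t g k
    rw [QuadraticMap.polar_add_right, QuadraticMap.polar_add_right,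
      QuadraticMap.polar_add_right, QuadraticMap.polar_smul_right,
      QuadraticMap.polar_smul_right, QuadraticMap.polar_smul_right,
      QuadraticMap.polar_smul_right, smul_eq_mul, smul_eq_mul, smul_eq_mul, smul_eq_mul]
  have ANISO : ∀ s t g k : K, s*s + s*t + β*(t*t) + a*(g*g) + g*k + b*(k*k) = 0 →
      s = 0 ∧ t = 0 ∧ g = 0 ∧ k = 0 := by
    intro s t g k hval
    have hvec : s • e + t • f + g • u + k • v = 0 := anis _ ((qval s t g k).trans hval)
    have hs : s = 0 := by
      have hcf := polcombo f s t g k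
      rw [hvec, QuadraticMap.polar_zero_right, pfe, pself, pfu, pfv] at hcf
      simpa using hcf.symm
    have ht : t = 0 := by
      have hcf := polcombo e s t g k
      rw [hvec, QuadraticMap.polar_zero_right, pself, pef, peu, pev] at hcf
      simpa using hcf.symm
    have hg : g = 0 := by
      have hcf := polcombo v s t g k
      rw [hvec, QuadraticMap.polar_zero_right, pve, pvf, pvu, pself] at hcf
      simpa using hcf.symm
    have hk : k = 0 := by
      have hcf := polcombo u s t g k
      rw [hvec, QuadraticMap.polar_zero_right, pue, puf, puv, pself] at hcf
      simpa using hcf.symm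
    exact ⟨hs, ht, hg, hk⟩
  -- operator algebra
  have O1 : (star e : Module.End K A) * (bull e) = 1 := by
    ext y
    simp [Module.End.mul_apply, Module.End.one_apply, hq, he1]
  have O3 : ∀ x : A, (star x : Module.End K A) * (bull x) = q x • 1 := by
    intro x; ext y
    simp [Module.End.mul_apply, hq, LinearMap.smul_apply, Module.End.one_apply]
  have O4 : ∀ x : A, (bull x : Module.End K A) * (star x) = q x • 1 := by
    intro x
    by_cases hx : x = 0
    · subst hx; simp
    · have hqx : q x ≠ 0 := fun h => hx (anis x h)
      have h1 : ((q x)⁻¹ • (star x : Module.End K A)) * (bull x) = 1 := by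
        rw [smul_mul_assoc, O3, smul_smul, inv_mul_cancel₀ hqx, one_smul]
      have h2 := mul_eq_one_comm.mp h1
      calc (bull x : Module.End K A) * star x
          = q x • ((bull x) * ((q x)⁻¹ • (star x : Module.End K A))) := by
            rw [mul_smul_comm, smul_smul, mul_inv_cancel₀ hqx, one_smul]
        _ = q x • 1 := by rw [h2]
  have LIN' : ∀ x z : A, (star x : Module.End K A) * bull z + star z * bull x
      = QuadraticMap.polar ⇑q x z • 1 := by
    intro x z
    have o := O3 (x + z)
    rw [map_add, map_add, add_mul, mul_add, mul_add, O3 x, O3 z] at o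
    have hp : QuadraticMap.polar ⇑q x z = q (x+z) - q x - q z := by
      simp only [QuadraticMap.polar]
    rw [hp]
    linear_combination (norm := module) o
  have LIN2' : ∀ x z : A, (bull x : Module.End K A) * star z + bull z * star x
      = QuadraticMap.polar ⇑q x z • 1 := by
    intro x z
    have o := O4 (x + z)
    rw [map_add, map_add, add_mul, mul_add, mul_add, O4 x, O4 z] at o
    have hp : QuadraticMap.polar ⇑q x z = q (x+z) - q x - q z := by
      simp only [QuadraticMap.polar]
    rw [hp]
    linear_combination (norm := module) o
  have aux : ∀ x z : A, ((star x : Module.End K A) * bull e) * (star z * bull e)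
      = QuadraticMap.polar ⇑q x e • (star z * bull e)
        - star e * ((bull x * star z) * bull e) := by
    intro x z
    have hsub : (star x : Module.End K A) * bull e
        = QuadraticMap.polar ⇑q x e • 1 - star e * bull x := eq_sub_of_add_eq (LIN' x e)
    rw [hsub, sub_mul, smul_mul_assoc, one_mul]
    congr 1
  have rel1 : ∀ x : A, ((star x : Module.End K A) * bull e) * (star x * bull e)
      = QuadraticMap.polar ⇑q x e • (star x * bull e) - q x • 1 := by
    intro x
    rw [aux x x, O4 x]
    congr 1
    rw [smul_mul_assoc, one_mul, mul_smul_comm, O1]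
  have rel2 : ∀ x z : A, ((star x : Module.End K A) * bull e) * (star z * bull e)
      + (star z * bull e) * (star x * bull e)
      = QuadraticMap.polar ⇑q x e • (star z * bull e)
        + QuadraticMap.polar ⇑q z e • (star x * bull e)
        - QuadraticMap.polar ⇑q x z • 1 := by
    intro x z
    rw [aux x z, aux z x]
    have hw : (star e : Module.End K A) * ((bull x * star z) * bull e)
        + star e * ((bull z * star x) * bull e)
        = QuadraticMap.polar ⇑q x z • 1 := by
      rw [← mul_add, ← add_mul, LIN2' x z, smul_mul_assoc, one_mul, mul_smul_comm, O1]
    rw [← hw]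
    abel
  have addself : ∀ T : Module.End K A, T + T = 0 := fun T => by
    rw [← two_smul K T, h2K, zero_smul]
  have negself : ∀ T : Module.End K A, -T = T := fun T =>
    neg_eq_of_add_eq_zero_left (addself T)
  set Pu : Module.End K A := (star u : Module.End K A) * bull e with hPudef
  set Pv : Module.End K A := (star v : Module.End K A) * bull e with hPvdef
  set Mf : Module.End K A := (star f : Module.End K A) * bull e with hMdef
  have hPu : Pu * Pu = a • 1 := by
    have h := rel1 u
    rw [pue, zero_smul, zero_sub, ← hadef] at h
    rw [hPudef, h, negself]
  have hPv : Pv * Pv = b • 1 := by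
    have h := rel1 v
    rw [pve, zero_smul, zero_sub, ← hbdef] at h
    rw [hPvdef, h, negself]
  have hMf : Mf * Mf = Mf + β • 1 := by
    have h := rel1 f
    rw [pfe, one_smul, ← hβdef] at h
    rw [hMdef, h, sub_eq_add_neg, negself]
  have huv : Pu * Pv + Pv * Pu = 1 := by
    have h := rel2 u v
    rw [pue, pve, puv, zero_smul, zero_smul, zero_add] at h
    rw [hPudef, hPvdef, h]
    simp [negself]
  have hMu : Mf * Pu + Pu * Mf = Pu := by
    have h := rel2 f u
    rw [pfe, pue, pfu, one_smul, zero_smul] at h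
    rw [hMdef, hPudef, h]
    simp
  have hMv : Mf * Pv + Pv * Mf = Pv := by
    have h := rel2 f v
    rw [pfe, pve, pfv, one_smul, zero_smul] at h
    rw [hMdef, hPvdef, h]
    simp
  obtain ⟨lam, hlam⟩ := get_lambda K A h2K hdim a b β ha hb Pu Pv Mf hPu hPv huv hMu hMv
    hMf e he0 ANISO
  have hbin : ∀ (c d : K) (p : K × K),
      binQF K c d p = c * p.1 * p.1 + p.1 * p.2 + d * (p.2 * p.2) := by
    intro c d p
    simp only [binQF, LinearMap.BilinMap.toQuadraticMap_apply, LinearMap.mk₂_apply]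
    ring
  set Φ : ((K × K) × (K × K)) →ₗ[K] A :=
    (((LinearMap.fst K K K).comp (LinearMap.fst K (K × K) (K × K)))
      + lam • ((LinearMap.snd K K K).comp (LinearMap.fst K (K × K) (K × K)))).smulRight e
    + ((LinearMap.snd K K K).comp (LinearMap.fst K (K × K) (K × K))).smulRight f
    + ((LinearMap.fst K K K).comp (LinearMap.snd K (K × K) (K × K))).smulRight u
    + ((LinearMap.snd K K K).comp (LinearMap.snd K (K × K) (K × K))).smulRight v with hΦdef
  have hΦapp : ∀ p : (K × K) × (K × K),
      Φ p = (p.1.1 + lam * p.1.2) • e + p.1.2 • f + p.2.1 • u + p.2.2 • v := by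
    intro p
    rw [hΦdef]
    simp only [LinearMap.add_apply, LinearMap.smulRight_apply, LinearMap.comp_apply,
      LinearMap.smul_apply, LinearMap.fst_apply, LinearMap.snd_apply, smul_eq_mul]
  have hΦinj : Function.Injective Φ := by
    rw [← LinearMap.ker_eq_bot, LinearMap.ker_eq_bot']
    intro p hp
    rw [hΦapp] at hp
    have ht : p.1.2 = 0 := by
      have hcf := polcombo e (p.1.1 + lam * p.1.2) p.1.2 p.2.1 p.2.2
      rw [hp, QuadraticMap.polar_zero_right, pself, pef, peu, pev] at hcf
      simpa using hcf.symm
    have hs : p.1.1 + lam * p.1.2 = 0 := by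
      have hcf := polcombo f (p.1.1 + lam * p.1.2) p.1.2 p.2.1 p.2.2
      rw [hp, QuadraticMap.polar_zero_right, pself, pfe, pfu, pfv] at hcf
      simpa using hcf.symm
    have hg : p.2.1 = 0 := by
      have hcf := polcombo v (p.1.1 + lam * p.1.2) p.1.2 p.2.1 p.2.2
      rw [hp, QuadraticMap.polar_zero_right, pself, pve, pvf, pvu] at hcf
      simpa using hcf.symm
    have hk : p.2.2 = 0 := by
      have hcf := polcombo u (p.1.1 + lam * p.1.2) p.1.2 p.2.1 p.2.2
      rw [hp, QuadraticMap.polar_zero_right, pself, pue, puf, puv] at hcf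
      simpa using hcf.symm
    have hs' : p.1.1 = 0 := by
      rw [ht, mul_zero, add_zero] at hs
      exact hs
    exact Prod.ext (Prod.ext hs' ht) (Prod.ext hg hk)
  have hΦsurj : Function.Surjective Φ :=
    (LinearMap.injective_iff_surjective_of_finrank_eq_finrank (by
      rw [hdim]
      simp [Module.finrank_prod, Module.finrank_self])).mp hΦinj
  refine ⟨a, b, ha, hb,
    ⟨QuadraticMap.IsometryEquiv.symm
      ⟨LinearEquiv.ofBijective Φ ⟨hΦinj, hΦsurj⟩, fun p => ?_⟩⟩⟩
  show q (Φ p) = ((binQF K 1 (a*b)).prod (binQF K a b)) p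
  rw [hΦapp, qval, QuadraticMap.prod_apply, hbin, hbin]
  linear_combination (p.1.2 * p.1.2) * hlam
    + (lam * p.1.1 * p.1.2 + β * (p.1.2 * p.1.2)) * h2K
end

section
/- Let (A, ⋆) be a finite-dimensional division algebra over K admitting a bilinear quasi-left-inversion. Then (A, ⋆) is isotopic to its reverse algebra (A, ⋆ᵒᵖ), where x ⋆ᵒᵖ y := y ⋆ x; in particular ⋆ᵒᵖ also admits a bilinear quasi-left-inversion. -/
private theorem smul_cancel_aux {K A : Type*} [Field K] [AddCommGroup A] [Module K A]
    (k k' : K) (w : A) (hw : w ≠ 0) (h : k • w = k' • w) : k = k' := by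
  have h2 : (k - k') • w = 0 := by rw [sub_smul, h, sub_self]
  rcases smul_eq_zero.mp h2 with h3 | h3
  · exact sub_eq_zero.mp h3
  · exact absurd h3 hw

private theorem eq_of_sub_descr {A : Type*} [AddCommGroup A] {x y p q : A}
    (h : p = q) (hd : x - y = p - q) : x = y := by
  have h0 : x - y = 0 := by rw [hd, h, sub_self]
  exact sub_eq_zero.mp h0

private theorem core_delta {K A : Type*} [Field K] [AddCommGroup A] [Module K A]
    (M : A → A → A) (eh : A) (T N : A → K) (B : A → A → K)
    (heh : eh ≠ 0)
    (hul : ∀ y, M eh y = y)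
    (hur : ∀ x, M x eh = x)
    (haddl : ∀ x y v, M (x + y) v = M x v + M y v)
    (haddr : ∀ x u v, M x (u + v) = M x u + M x v)
    (hsmull : ∀ (s : K) x v, M (s • x) v = s • M x v)
    (hsmulr : ∀ (s : K) x v, M x (s • v) = s • M x v)
    (hdiv : ∀ x y, x ≠ 0 → y ≠ 0 → M x y ≠ 0)
    (hTadd : ∀ x y, T (x + y) = T x + T y)
    (hTsmul : ∀ (s : K) x, T (s • x) = s * T x)
    (hTe : T eh = 2)
    (hNa : ∀ x, x ≠ 0 → N x ≠ 0)
    (hBdef : ∀ x y, N (x + y) = N x + N y + B x y)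
    (hBaddl : ∀ x y z, B (x + y) z = B x z + B y z)
    (hBsmull : ∀ (s : K) x z, B (s • x) z = s * B x z)
    (hNsmul : ∀ (s : K) x, N (s • x) = s ^ 2 * N x)
    (halpha : ∀ x v, M x (M x v) = T x • M x v - N x • v) :
    ∀ x y, T (M x y) = T x * T y - B x y := by
  -- derived linearity facts
  have hMnegl : ∀ x v, M (-x) v = - M x v := by
    intro x v
    have h := hsmull (-1) x v
    rwa [neg_one_smul, neg_one_smul] at h
  have hMnegr : ∀ x v, M x (-v) = - M x v := by
    intro x v
    have h := hsmulr (-1) x v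
    rwa [neg_one_smul, neg_one_smul] at h
  have hMsubl : ∀ x y v, M (x - y) v = M x v - M y v := by
    intro x y v
    rw [sub_eq_add_neg, haddl, hMnegl, ← sub_eq_add_neg]
  have hMsubr : ∀ x u v, M x (u - v) = M x u - M x v := by
    intro x u v
    rw [sub_eq_add_neg, haddr, hMnegr, ← sub_eq_add_neg]
  have hTneg : ∀ x, T (-x) = - T x := by
    intro x
    have h := hTsmul (-1) x
    rwa [neg_one_smul, neg_one_mul] at h
  have hTsub : ∀ x y, T (x - y) = T x - T y := by
    intro x y
    rw [sub_eq_add_neg, hTadd, hTneg, ← sub_eq_add_neg]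
  have hBsym : ∀ x y, B x y = B y x := by
    intro x y
    have h1 := hBdef x y
    have h2 := hBdef y x
    rw [add_comm y x] at h2
    linear_combination h2 - h1
  have hBaddr : ∀ z x y, B z (x + y) = B z x + B z y := by
    intro z x y
    rw [hBsym z (x + y), hBaddl, hBsym x z, hBsym y z]
  have hBsmulr : ∀ (s : K) z x, B z (s • x) = s * B z x := by
    intro s z x
    rw [hBsym z (s • x), hBsmull, hBsym x z]
  have hBsubr : ∀ z x y, B z (x - y) = B z x - B z y := by
    intro z x y
    have h := hBsmulr (-1) z y
    rw [neg_one_smul, neg_one_mul] at h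
    rw [sub_eq_add_neg, hBaddr, h, ← sub_eq_add_neg]
  have hsq : ∀ x, M x x = T x • x - N x • eh := by
    intro x
    have h := halpha x eh
    rwa [hur] at h
  have hpolar : ∀ x y, M x y + M y x = T x • y + T y • x - B x y • eh := by
    intro x y
    have h1 : M x x + M x y + (M y x + M y y) = T (x + y) • (x + y) - N (x + y) • eh := by
      rw [← haddr x x y, ← haddr y x y, ← haddl x y (x + y)]
      exact hsq (x + y)
    rw [hsq x, hsq y, hTadd, hBdef] at h1
    exact eq_of_sub_descr h1 (by module)
  have hbeta : ∀ x y v, M x (M y v) + M y (M x v)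
      = T y • M x v + T x • M y v - B x y • v := by
    intro x y v
    have h1 := halpha (x + y) v
    rw [haddl x y v, haddr, haddl, haddl, halpha x v, halpha y v, hTadd, hBdef] at h1
    exact eq_of_sub_descr h1 (by module)
  have hBe : ∀ x, B x eh = T x := by
    intro x
    have h := hpolar x eh
    rw [hur, hul, hTe] at h
    have h2 : (T x - B x eh) • eh = 0 :=
      eq_of_sub_descr h.symm (by module)
    rcases smul_eq_zero.mp h2 with h3 | h3
    · exact (sub_eq_zero.mp h3).symm
    · exact absurd h3 heh
  have hBxx : ∀ x, B x x = 2 * N x := by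
    intro x
    have h := hBdef x x
    have h2 : N (x + x) = 4 * N x := by
      rw [← two_smul K x, hNsmul]; norm_num
    rw [h2] at h
    linear_combination -h
  have hTM : ∀ x y, T (M x y) + T (M y x) = 2 * (T x * T y) - 2 * B x y := by
    intro x y
    have h := congrArg T (hpolar x y)
    rw [hTadd] at h
    have hr : T (T x • y + T y • x - B x y • eh) = T x * T y + T y * T x - B x y * 2 := by
      rw [hTsub, hTadd, hTsmul, hTsmul, hTsmul, hTe]
    rw [hr] at h
    linear_combination h
  -- span-contradiction lemma
  have hspan : ∀ u w : A,
      (∀ p q r : K, p • eh + q • u + r • w = 0 → p = 0 ∧ q = 0 ∧ r = 0) →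
      ∀ α β γ : K, M u w ≠ α • eh + β • u + γ • w := by
    intro u w hind α β γ hz
    have E : α • u + β • (T u • u - N u • eh) + γ • (α • eh + β • u + γ • w)
        = T u • (α • eh + β • u + γ • w) - N u • w := by
      have h1 := halpha u w
      rw [hz] at h1
      rw [haddr, haddr, hsmulr, hsmulr, hsmulr, hur, hsq, hz] at h1
      exact h1
    have E2 : (γ * α - β * N u - T u * α) • eh + ((α + β * T u + γ * β) - T u * β) • u
        + (γ * γ - (T u * γ - N u)) • w = 0 := by
      have h0 : (α • u + β • (T u • u - N u • eh) + γ • (α • eh + β • u + γ • w))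
          - (T u • (α • eh + β • u + γ • w) - N u • w) = 0 := by rw [E, sub_self]
      rw [← h0]; module
    obtain ⟨e1, e2, e3⟩ := hind _ _ _ E2
    have hu1 : u - γ • eh ≠ 0 := by
      intro h0
      have h0' : u = γ • eh := sub_eq_zero.mp h0
      have hc : γ • eh + (-1 : K) • u + (0 : K) • w = 0 := by
        rw [zero_smul, add_zero, neg_one_smul, ← h0']
        simp
      obtain ⟨_, hq, _⟩ := hind _ _ _ hc
      norm_num at hq
    have hu2 : u - (T u - γ) • eh ≠ 0 := by
      intro h0
      have h0' : u = (T u - γ) • eh := sub_eq_zero.mp h0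
      have hc : (T u - γ) • eh + (-1 : K) • u + (0 : K) • w = 0 := by
        rw [zero_smul, add_zero, neg_one_smul, ← h0']
        simp
      obtain ⟨_, hq, _⟩ := hind _ _ _ hc
      norm_num at hq
    have key : M (u - γ • eh) (u - (T u - γ) • eh) = 0 := by
      rw [hMsubl, hMsubr, hMsubr, hsmull, hsmull, hsmulr, hsmulr, hur, hul, hul, hsq]
      have hexp : T u • u - N u • eh - (T u - γ) • u - (γ • u - γ • ((T u - γ) • eh))
          = (γ * (T u - γ) - N u) • eh := by module
      rw [hexp]
      have e3' : γ * (T u - γ) - N u = 0 := by linear_combination -e3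
      rw [e3', zero_smul]
    exact hdiv _ _ hu1 hu2 key
  -- core configuration computation
  have hcore : ∀ u w : A,
      (∀ p q r : K, p • eh + q • u + r • w = 0 → p = 0 ∧ q = 0 ∧ r = 0) →
      T w = 0 → T (M u w) = - B u w := by
    intro u w hind hTw
    obtain ⟨z, hz⟩ : ∃ z', M u w = z' := ⟨_, rfl⟩
    obtain ⟨a, ha⟩ : ∃ a', T u = a' := ⟨_, rfl⟩
    have s2 : M w w = -(N w • eh) := by
      rw [hsq w, hTw, zero_smul, zero_sub]
    have s3 : M w z = N w • u - B u w • w - (a * N w) • eh := by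
      have h := hbeta w u w
      rw [hz, hTw, ha, s2, hBsym w u, hMnegr, hsmulr, hur] at h
      exact eq_of_sub_descr h (by module)
    have s4 : M z w = (T z + B u w) • w + (a * N w - B z w) • eh - N w • u := by
      have h := hpolar z w
      rw [hTw, s3] at h
      exact eq_of_sub_descr h (by module)
    have s5 : M u (M z w) = (T z + B u w) • z - B z w • u + (N w * N u) • eh := by
      rw [s4, hMsubr, haddr, hsmulr, hsmulr, hsmulr, hur, hsq u, hz, ha]
      module
    have s6 : M z z = (-(B u w)) • z + (B z w - a * N w) • u
        + (a * (T z + B u w) - B z u) • w + (a * (a * N w - B z w) - N w * N u) • eh := by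
      have h := hbeta z u w
      rw [hz, ha, s5, s4] at h
      exact eq_of_sub_descr h (by module)
    have s8 : (T z + B u w) • z = (B z w - a * N w) • u + (a * (T z + B u w) - B z u) • w
        + (a * (a * N w - B z w) - N w * N u + N z) • eh := by
      have h := hsq z
      rw [s6] at h
      exact eq_of_sub_descr h.symm (by module)
    by_cases hc : T z + B u w = 0
    · rw [hz]; linear_combination hc
    · exfalso
      have h2 := congrArg (fun v => (T z + B u w)⁻¹ • v) s8
      rw [inv_smul_smul₀ hc] at h2
      refine hspan u w hind ((T z + B u w)⁻¹ * (a * (a * N w - B z w) - N w * N u + N z))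
        ((T z + B u w)⁻¹ * (B z w - a * N w))
        ((T z + B u w)⁻¹ * (a * (T z + B u w) - B z u)) ?_
      rw [hz]
      exact h2.trans (by module)
  -- final reduction
  intro x y
  by_cases h1 : ∃ s t : K, y = s • eh + t • x
  · obtain ⟨s, t, rfl⟩ := h1
    rw [haddr, hsmulr, hsmulr, hur, hsq x]
    rw [hTadd, hTsmul, hTsmul, hTsub, hTsmul, hTsmul, hTe]
    rw [hTadd, hTsmul, hTsmul, hTe, hBaddr, hBsmulr, hBsmulr, hBe, hBxx]
    ring
  by_cases h2 : ∃ s : K, x = s • eh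
  · obtain ⟨s, rfl⟩ := h2
    rw [hsmull, hul, hTsmul, hTsmul, hTe, hBsmull, hBsym eh y, hBe]
    ring
  have hind : ∀ p q r : K, p • eh + q • x + r • y = 0 → p = 0 ∧ q = 0 ∧ r = 0 := by
    intro p q r hpqr
    rcases eq_or_ne r 0 with hr | hr
    · rcases eq_or_ne q 0 with hq | hq
      · subst hr; subst hq
        simp only [zero_smul, add_zero] at hpqr
        rcases smul_eq_zero.mp hpqr with hp | hp
        · exact ⟨hp, rfl, rfl⟩
        · exact absurd hp heh
      · exfalso
        apply h2
        refine ⟨q⁻¹ * (-p), ?_⟩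
        have h0 : q • x - (-p) • eh = 0 := by
          subst hr
          have hd : q • x - (-p) • eh = p • eh + q • x + (0 : K) • y := by module
          rw [hd, hpqr]
        have h0' : q • x = (-p) • eh := sub_eq_zero.mp h0
        rw [← smul_smul, ← h0', inv_smul_smul₀ hq]
    · exfalso
      apply h1
      refine ⟨r⁻¹ * (-p), r⁻¹ * (-q), ?_⟩
      have h0 : r • y - ((-p) • eh + (-q) • x) = 0 := by
        have hd : r • y - ((-p) • eh + (-q) • x) = p • eh + q • x + r • y := by module
        rw [hd, hpqr]
      have h0' : r • y = (-p) • eh + (-q) • x := sub_eq_zero.mp h0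
      rw [← smul_smul, ← smul_smul, ← smul_add, ← h0', inv_smul_smul₀ hr]
  by_cases h3 : T y = 0
  · have h := hcore x y hind h3
    rw [h, h3]; ring
  by_cases h4 : T x = 0
  · have hind' : ∀ p q r : K, p • eh + q • y + r • x = 0 → p = 0 ∧ q = 0 ∧ r = 0 := by
      intro p q r h0
      obtain ⟨hp, hr', hq'⟩ := hind p r q (by rw [← h0]; module)
      exact ⟨hp, hq', hr'⟩
    have h := hcore y x hind' h4
    linear_combination hTM x y - h + hBsym y x + T y * h4
  · have hTy' : T (y - (T y / T x) • x) = 0 := by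
      rw [hTsub, hTsmul, div_mul_cancel₀ _ h4, sub_self]
    have hind'' : ∀ p q r : K, p • eh + q • x + r • (y - (T y / T x) • x) = 0
        → p = 0 ∧ q = 0 ∧ r = 0 := by
      intro p q r h0
      obtain ⟨hp, hq', hr⟩ := hind p (q - r * (T y / T x)) r (by rw [← h0]; module)
      refine ⟨hp, ?_, hr⟩
      rw [hr] at hq'
      simpa using hq'
    have h := hcore x (y - (T y / T x) • x) hind'' hTy'
    rw [hMsubr, hsmulr, hsq x] at h
    rw [hTsub, hTsmul, hTsub, hTsmul, hTsmul, hTe] at h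
    rw [hBsubr, hBsmulr, hBxx] at h
    have hdiv' : (T y / T x) * (T x * T x) = T y * T x := by field_simp
    linear_combination h + hdiv'

private theorem exists_uniform_smul {K A : Type*} [Field K] [AddCommGroup A] [Module K A]
    [Nontrivial A] (f : A →ₗ[K] A) (hf : ∀ y : A, y ≠ 0 → ∃ k : K, f y = k • y) :
    ∃ k : K, ∀ y : A, f y = k • y := by
  obtain ⟨y₀, hy₀⟩ := exists_ne (0 : A)
  obtain ⟨k, hk⟩ := hf y₀ hy₀
  refine ⟨k, fun y => ?_⟩
  rcases eq_or_ne y 0 with rfl | hy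
  · simp
  obtain ⟨k', hk'⟩ := hf y hy
  rw [hk']
  by_cases hdep : ∃ s : K, y = s • y₀
  · obtain ⟨s, rfl⟩ := hdep
    have hs : s ≠ 0 := by rintro rfl; simp at hy
    have h1 : f (s • y₀) = (s * k) • y₀ := by rw [map_smul, hk, smul_smul]
    have h2 : (k' * s) • y₀ = (s * k) • y₀ := by rw [← smul_smul, ← hk', h1]
    have h3 := smul_cancel_aux _ _ _ hy₀ h2
    rw [smul_smul, smul_smul, h3, mul_comm]
  · obtain ⟨k'', hk''⟩ := hf (y + y₀) (by
      intro h0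
      exact hdep ⟨-1, by rw [neg_one_smul, ← eq_neg_of_add_eq_zero_left h0]⟩)
    have h1 : k'' • (y + y₀) = k' • y + k • y₀ := by rw [← hk'', map_add, hk, hk']
    have h2 : (k' - k'') • y = (k'' - k) • y₀ :=
      eq_of_sub_descr h1.symm (by module)
    rcases eq_or_ne k' k'' with he' | hne'
    · rw [he', sub_self, zero_smul] at h2
      have h3 := (smul_eq_zero.mp h2.symm).resolve_right hy₀
      have h4 : k'' = k := sub_eq_zero.mp h3
      rw [he', h4]
    · exact absurd ⟨(k' - k'')⁻¹ * (k'' - k), by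
        rw [← smul_smul, ← h2, inv_smul_smul₀ (sub_ne_zero.mpr hne')]⟩ hdep

theorem stmt_19 (K A : Type*) [Field K] [AddCommGroup A] [Module K A]
    [FiniteDimensional K A] [Nontrivial A]
    (star bull : A →ₗ[K] A →ₗ[K] A)
    (hstar : ∀ x y : A, x ≠ 0 → y ≠ 0 → star x y ≠ 0)
    (hbull : ∀ x y : A, x ≠ 0 → y ≠ 0 →
      bull x y ≠ 0 ∧ ∃ c : K, star x (bull x y) = c • y) :
    (∃ f g h : A ≃ₗ[K] A, ∀ x y : A, star x y = h.symm (star (g y) (f x))) ∧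
    (∃ bull' : A →ₗ[K] A →ₗ[K] A, ∀ x y : A, x ≠ 0 → y ≠ 0 →
      bull' x y ≠ 0 ∧ ∃ c : K, star (bull' x y) x = c • y) := by
  classical
  obtain ⟨e, he⟩ := exists_ne (0 : A)
  -- uniform scalar function
  have hcex : ∀ x : A, ∃ k : K, ∀ y, star x (bull x y) = k • y := by
    intro x
    rcases eq_or_ne x 0 with rfl | hx
    · exact ⟨0, fun y => by simp⟩
    · obtain ⟨k, hk⟩ := exists_uniform_smul ((star x).comp (bull x)) (fun y hy => by
        obtain ⟨hne, k, hk⟩ := hbull x y hx hy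
        exact ⟨k, by simpa using hk⟩)
      exact ⟨k, fun y => by simpa using hk y⟩
  choose c hc using hcex
  have hcne : ∀ x : A, x ≠ 0 → c x ≠ 0 := by
    intro x hx h0
    have h1 := hc x e
    rw [h0, zero_smul] at h1
    exact hstar x (bull x e) hx (hbull x e hx he).1 h1
  have hce := hcne e he
  have hLinj : ∀ x : A, x ≠ 0 → Function.Injective (star x) := by
    intro x hx a b hab
    by_contra hne
    exact hstar x (a - b) hx (sub_ne_zero.mpr hne) (by rw [map_sub, hab, sub_self])
  have hc' : ∀ x y, bull x (star x y) = c x • y := by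
    intro x y
    rcases eq_or_ne x 0 with rfl | hx
    · have h0 := hc 0 e
      simp only [map_zero, LinearMap.zero_apply] at h0 ⊢
      rcases smul_eq_zero.mp h0.symm with h1 | h1
      · rw [h1, zero_smul]
      · exact absurd h1 he
    · apply hLinj x hx
      rw [hc x (star x y), map_smul]
  -- polarized identity
  have hPB : ∀ x y w : A, star x (bull y w) + star y (bull x w)
      = (c (x + y) - c x - c y) • w := by
    intro x y w
    have h := hc (x + y) w
    have h1 : star (x + y) (bull (x + y) w)
        = star x (bull x w) + star x (bull y w) + (star y (bull x w) + star y (bull y w)) := by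
      rw [map_add bull x y, LinearMap.add_apply, map_add star x y, LinearMap.add_apply,
        map_add, map_add]
    rw [h1, hc x w, hc y w] at h
    exact eq_of_sub_descr h (by module)
  have hbcancel : ∀ k k' : K, k • e = k' • e → k = k' := fun k k' h =>
    smul_cancel_aux k k' e he h
  have hbaddl : ∀ x x' y : A, (c (x + x' + y) - c (x + x') - c y)
      = (c (x + y) - c x - c y) + (c (x' + y) - c x' - c y) := by
    intro x x' y
    apply hbcancel
    have h1 := hPB (x + x') y e
    have h4 : star (x + x') (bull y e) + star y (bull (x + x') e)
        = (star x (bull y e) + star y (bull x e)) + (star x' (bull y e) + star y (bull x' e)) := by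
      rw [map_add star x x', LinearMap.add_apply, map_add bull x x', LinearMap.add_apply,
        map_add]
      abel
    rw [h4, hPB x y e, hPB x' y e] at h1
    rw [← h1, add_smul]
  have hbsmull : ∀ (s : K) (x y : A), (c (s • x + y) - c (s • x) - c y)
      = s * (c (x + y) - c x - c y) := by
    intro s x y
    apply hbcancel
    have h1 := hPB (s • x) y e
    have h4 : star (s • x) (bull y e) + star y (bull (s • x) e)
        = s • (star x (bull y e) + star y (bull x e)) := by
      rw [map_smul star s x, LinearMap.smul_apply, map_smul bull s x, LinearMap.smul_apply,
        map_smul, smul_add]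
    rw [h4, hPB x y e] at h1
    rw [← h1, smul_smul]
  have hcsmul : ∀ (s : K) (z : A), c (s • z) = s ^ 2 * c z := by
    intro s z
    apply hbcancel
    have h1 : star (s • z) (bull (s • z) e) = (s * (s * c z)) • e := by
      rw [map_smul bull s z, LinearMap.smul_apply, map_smul star s z, LinearMap.smul_apply,
        map_smul, hc z e]
      module
    have h2 := hc (s • z) e
    rw [h1] at h2
    rw [← h2]
    have h3 : s * (s * c z) = s ^ 2 * c z := by ring
    rw [h3]
  -- key identity
  have hKEY : ∀ x w : A, star e (bull x (star e w))
      = (c (x + e) - c x - c e) • star e w - c e • star x w := by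
    intro x w
    have h := hPB x e (star e w)
    rw [hc' e w, map_smul] at h
    exact eq_of_sub_descr h (by module)
  -- Phase 2: equivalences and the unital algebra M
  have hRinj : Function.Injective (star.flip e) := by
    intro a b hab
    by_contra hne
    refine hstar (a - b) e (sub_ne_zero.mpr hne) he ?_
    rw [map_sub star a b, LinearMap.sub_apply, sub_eq_zero]
    exact hab
  have hLinjE : Function.Injective (star e) := hLinj e he
  obtain ⟨rho, hrho⟩ : ∃ r : A ≃ₗ[K] A, ∀ x, star x e = r x :=
    ⟨LinearEquiv.ofBijective (star.flip e)
      ⟨hRinj, LinearMap.injective_iff_surjective.mp hRinj⟩, fun x => rfl⟩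
  obtain ⟨el, hel⟩ : ∃ r : A ≃ₗ[K] A, ∀ y, star e y = r y :=
    ⟨LinearEquiv.ofBijective (star e)
      ⟨hLinjE, LinearMap.injective_iff_surjective.mp hLinjE⟩, fun y => rfl⟩
  have hrhos : ∀ x, star (rho.symm x) e = x := fun x => by
    rw [hrho]; exact rho.apply_symm_apply x
  have hels : ∀ y, star e (el.symm y) = y := fun y => by
    rw [hel]; exact el.apply_symm_apply y
  obtain ⟨eh, heh_def⟩ : ∃ v : A, v = star e e := ⟨_, rfl⟩
  have heh : eh ≠ 0 := by rw [heh_def]; exact hstar e e he he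
  obtain ⟨M, hMdef⟩ : ∃ M : A → A → A, ∀ x y, M x y = star (rho.symm x) (el.symm y) :=
    ⟨_, fun _ _ => rfl⟩
  obtain ⟨T, hTdef⟩ : ∃ T : A → K,
      ∀ x, T x = (c (rho.symm x + e) - c (rho.symm x) - c e) * (c e)⁻¹ := ⟨_, fun _ => rfl⟩
  obtain ⟨N, hNdef⟩ : ∃ N : A → K, ∀ x, N x = c (rho.symm x) * (c e)⁻¹ := ⟨_, fun _ => rfl⟩
  obtain ⟨Bf, hBfdef⟩ : ∃ Bf : A → A → K, ∀ x y,
      Bf x y = (c (rho.symm x + rho.symm y) - c (rho.symm x) - c (rho.symm y)) * (c e)⁻¹ :=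
    ⟨_, fun _ _ => rfl⟩
  have hrhoe : rho.symm eh = e :=
    (LinearEquiv.symm_apply_eq rho).mpr (heh_def.trans (hrho e))
  have hele : el.symm eh = e :=
    (LinearEquiv.symm_apply_eq el).mpr (heh_def.trans (hel e))
  have hul : ∀ y, M eh y = y := fun y => by rw [hMdef, hrhoe, hels]
  have hur : ∀ x, M x eh = x := fun x => by rw [hMdef, hele, hrhos]
  have haddl : ∀ x y v, M (x + y) v = M x v + M y v := by
    intro x y v
    rw [hMdef, hMdef, hMdef, map_add rho.symm, map_add star, LinearMap.add_apply]
  have haddr : ∀ x u v, M x (u + v) = M x u + M x v := by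
    intro x u v
    rw [hMdef, hMdef, hMdef, map_add el.symm, map_add]
  have hsmull : ∀ (s : K) x v, M (s • x) v = s • M x v := by
    intro s x v
    rw [hMdef, hMdef, map_smul rho.symm, map_smul star, LinearMap.smul_apply]
  have hsmulr : ∀ (s : K) x v, M x (s • v) = s • M x v := by
    intro s x v
    rw [hMdef, hMdef, map_smul el.symm, map_smul]
  have hne_rho : ∀ x : A, x ≠ 0 → rho.symm x ≠ 0 := fun x hx h0 =>
    hx (by rw [← rho.apply_symm_apply x, h0, map_zero])
  have hne_el : ∀ x : A, x ≠ 0 → el.symm x ≠ 0 := fun x hx h0 =>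
    hx (by rw [← el.apply_symm_apply x, h0, map_zero])
  have hdivM : ∀ x y, x ≠ 0 → y ≠ 0 → M x y ≠ 0 := fun x y hx hy => by
    rw [hMdef]; exact hstar _ _ (hne_rho x hx) (hne_el y hy)
  have hTadd : ∀ x y, T (x + y) = T x + T y := by
    intro x y
    rw [hTdef, hTdef, hTdef, map_add rho.symm, hbaddl (rho.symm x) (rho.symm y) e]
    ring
  have hTsmul : ∀ (s : K) x, T (s • x) = s * T x := by
    intro s x
    rw [hTdef, hTdef, map_smul rho.symm, hbsmull s (rho.symm x) e]
    ring
  have hTe : T eh = 2 := by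
    rw [hTdef, hrhoe]
    have h1 : c (e + e) = 4 * c e := by
      rw [← two_smul K e, hcsmul]; norm_num
    rw [h1]
    have h2 : 4 * c e - c e - c e = 2 * c e := by ring
    rw [h2, mul_inv_cancel_right₀ hce]
  have hNa : ∀ x, x ≠ 0 → N x ≠ 0 := fun x hx => by
    rw [hNdef]; exact mul_ne_zero (hcne _ (hne_rho x hx)) (inv_ne_zero hce)
  have hNB : ∀ x y, N (x + y) = N x + N y + Bf x y := by
    intro x y
    rw [hNdef, hNdef, hNdef, hBfdef, map_add rho.symm]
    ring
  have hBaddl : ∀ x y z, Bf (x + y) z = Bf x z + Bf y z := by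
    intro x y z
    rw [hBfdef, hBfdef, hBfdef, map_add rho.symm, hbaddl]
    ring
  have hBsmull : ∀ (s : K) x z, Bf (s • x) z = s * Bf x z := by
    intro s x z
    rw [hBfdef, hBfdef, map_smul rho.symm, hbsmull]
    ring
  have hNsmul : ∀ (s : K) x, N (s • x) = s ^ 2 * N x := by
    intro s x
    rw [hNdef, hNdef, map_smul rho.symm, hcsmul]
    ring
  have halpha : ∀ x v, M x (M x v) = T x • M x v - N x • v := by
    intro x v
    have hBO : c e • star (rho.symm x) (el.symm (star (rho.symm x) (el.symm v)))
        = (c (rho.symm x + e) - c (rho.symm x) - c e) • star (rho.symm x) (el.symm v)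
          - c (rho.symm x) • v := by
      have h := hKEY (rho.symm x) (el.symm (star (rho.symm x) (el.symm v)))
      rw [hels, hc' (rho.symm x) (el.symm v), map_smul, hels] at h
      exact eq_of_sub_descr h (by module)
    have h2 := congrArg (fun t => (c e)⁻¹ • t) hBO
    rw [inv_smul_smul₀ hce] at h2
    rw [hMdef x (M x v), hMdef x v, hTdef, hNdef, h2]
    module
  have hdelta : ∀ x y, T (M x y) = T x * T y - Bf x y :=
    core_delta M eh T N Bf heh hul hur haddl haddr hsmull hsmulr hdivM hTadd hTsmul hTe
      hNa hNB hBaddl hBsmull hNsmul halpha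
  -- assembly
  have hsq : ∀ x, M x x = T x • x - N x • eh := by
    intro x
    have h := halpha x eh
    rwa [hur] at h
  have hpolar : ∀ x y, M x y + M y x = T x • y + T y • x - Bf x y • eh := by
    intro x y
    have h1 : M x x + M x y + (M y x + M y y) = T (x + y) • (x + y) - N (x + y) • eh := by
      rw [← haddr x x y, ← haddr y x y, ← haddl x y (x + y)]
      exact hsq (x + y)
    rw [hsq x, hsq y, hTadd, hNB] at h1
    exact eq_of_sub_descr h1 (by module)
  have hMnegl : ∀ x v, M (-x) v = - M x v := by
    intro x v
    have h := hsmull (-1) x v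
    rwa [neg_one_smul, neg_one_smul] at h
  have hMnegr : ∀ x v, M x (-v) = - M x v := by
    intro x v
    have h := hsmulr (-1) x v
    rwa [neg_one_smul, neg_one_smul] at h
  have hMsubl : ∀ x y v, M (x - y) v = M x v - M y v := by
    intro x y v
    rw [sub_eq_add_neg, haddl, hMnegl, ← sub_eq_add_neg]
  have hMsubr : ∀ x u v, M x (u - v) = M x u - M x v := by
    intro x u v
    rw [sub_eq_add_neg, haddr, hMnegr, ← sub_eq_add_neg]
  have hTneg : ∀ v, T (-v) = - T v := by
    intro v
    have h := hTsmul (-1) v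
    rwa [neg_one_smul, neg_one_mul] at h
  have hTsub : ∀ u v, T (u - v) = T u - T v := by
    intro u v
    rw [sub_eq_add_neg, hTadd, hTneg, ← sub_eq_add_neg]
  obtain ⟨barf, hbarf⟩ : ∃ b : A → A, ∀ x, b x = T x • eh - x := ⟨_, fun _ => rfl⟩
  have hTbar : ∀ x, T (barf x) = T x := by
    intro x
    rw [hbarf, hTsub, hTsmul, hTe]
    ring
  have hbarbar : ∀ x, barf (barf x) = x := by
    intro x
    rw [hbarf (barf x), hTbar, hbarf]
    module
  have hanti : ∀ x y, barf (M x y) = M (barf y) (barf x) := by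
    intro x y
    have hyx : M y x = T x • y + T y • x - Bf x y • eh - M x y :=
      eq_of_sub_descr (hpolar x y) (by module)
    rw [hbarf (M x y), hdelta x y, hbarf y, hbarf x]
    simp only [hMsubl, hMsubr, hsmull, hsmulr, hul, hur]
    rw [hyx]
    module
  have hbarsmul : ∀ (s : K) v, barf (s • v) = s • barf v := by
    intro s v
    rw [hbarf, hbarf, hTsmul]
    module
  have hbaradd : ∀ u v, barf (u + v) = barf u + barf v := by
    intro u v
    rw [hbarf, hbarf, hbarf, hTadd]
    module
  let barL : A →ₗ[K] A :=
    { toFun := barf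
      map_add' := hbaradd
      map_smul' := fun s x => by simp only [RingHom.id_apply]; exact hbarsmul s x }
  have hinv : barL.comp barL = LinearMap.id := by
    apply LinearMap.ext
    intro x
    simp only [LinearMap.comp_apply, LinearMap.id_apply]
    exact hbarbar x
  let barE : A ≃ₗ[K] A := LinearEquiv.ofLinear barL barL hinv hinv
  have hbarE : ∀ x, barE x = barf x := fun x => rfl
  have hbarEs : ∀ x, barE.symm x = barf x := fun x => rfl
  obtain ⟨f, hfapp⟩ : ∃ f : A ≃ₗ[K] A, ∀ x, f x = el.symm (barf (rho x)) :=
    ⟨rho.trans (barE.trans el.symm), fun x => by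
      simp only [LinearEquiv.trans_apply]; rw [hbarE]⟩
  obtain ⟨g, hgapp⟩ : ∃ g : A ≃ₗ[K] A, ∀ y, g y = rho.symm (barf (el y)) :=
    ⟨el.trans (barE.trans rho.symm), fun y => by
      simp only [LinearEquiv.trans_apply]; rw [hbarE]⟩
  have hmain : ∀ x y, star (g y) (f x) = barf (star x y) := by
    intro x y
    have h1 : star (g y) (f x) = M (barf (el y)) (barf (rho x)) := by
      rw [hgapp, hfapp, hMdef]
    have h2 : M (rho x) (el y) = star x y := by
      rw [hMdef, rho.symm_apply_apply, el.symm_apply_apply]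
    rw [h1, ← hanti, h2]
  refine ⟨⟨f, g, barE, fun x y => by rw [hmain x y, hbarEs, hbarbar]⟩, ?_⟩
  -- Part 2
  refine ⟨((bull.comp f.symm.toLinearMap).compl₂ barE.symm.toLinearMap).compr₂ g.toLinearMap,
    fun x y hx hy => ?_⟩
  have happ : (((bull.comp f.symm.toLinearMap).compl₂ barE.symm.toLinearMap).compr₂
      g.toLinearMap) x y = g (bull (f.symm x) (barE.symm y)) := by
    simp [LinearMap.compr₂_apply, LinearMap.compl₂_apply, LinearMap.comp_apply]
  have hu : f.symm x ≠ 0 := fun h0 => hx (by rw [← f.apply_symm_apply x, h0, map_zero])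
  have hv : barE.symm y ≠ 0 := fun h0 => hy (by rw [← barE.apply_symm_apply y, h0, map_zero])
  constructor
  · rw [happ]
    intro h0
    apply (hbull _ _ hu hv).1
    have h1 : g (bull (f.symm x) (barE.symm y)) = g 0 := by rw [h0, map_zero]
    exact g.injective h1
  · refine ⟨c (f.symm x), ?_⟩
    rw [happ]
    have hgf := hmain (f.symm x) (bull (f.symm x) (barE.symm y))
    rw [f.apply_symm_apply] at hgf
    rw [hgf, hc (f.symm x) (barE.symm y), hbarsmul, hbarEs, hbarbar]
end
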